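/- arXiv:0912.3834 — 5 statements merged into one kernel-verified Lean document; each statement's English description precedes it below -/
import Mathlib

section
/- Let d = ((d_i^+, d_i^-))_{i=1}^N be a digraphic integer-pair sequence. Then any two simple directed graph realizations G and G' of d can be transformed into one another by a finite sequence of moves, each of which is either a 2-switch or a reorientation of an induced directed 3-cycle; equivalently, the meta-graph Ω_d, whose vertices are the realizations in R(d) and whose edges join realizations differing by a single 2-switch or a single directed 3-cycle reorientation, is connected. -/
/-- A simple directed graph on vertex set `V`: an irreflexive (Boolean) arc
relation, i.e. no self-loops and at most one arc in each direction. -/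
structure SDigraph (V : Type) where
  Adj : V → V → Bool
  irrefl : ∀ v, Adj v v = false

/-- Out-degree of a vertex. -/
def SDigraph.outDeg {V : Type} [Fintype V] [DecidableEq V]
    (G : SDigraph V) (v : V) : ℕ :=
  (Finset.univ.filter fun x => G.Adj v x = true).card

/-- In-degree of a vertex. -/
def SDigraph.inDeg {V : Type} [Fintype V] [DecidableEq V]
    (G : SDigraph V) (v : V) : ℕ :=
  (Finset.univ.filter fun x => G.Adj x v = true).card

/-- `G` realizes the integer-pair (degree) sequence `d`: vertex `v` has
out-degree `(d v).1` and in-degree `(d v).2`. -/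
def Realizes {V : Type} [Fintype V] [DecidableEq V]
    (G : SDigraph V) (d : V → ℕ × ℕ) : Prop :=
  ∀ v, G.outDeg v = (d v).1 ∧ G.inDeg v = (d v).2

/-- `H` is obtained from `G` by a single 2-switch: arcs `(v₁,v₂)`, `(v₃,v₄)`
are replaced by `(v₁,v₄)`, `(v₃,v₂)`, allowed only when the four vertices
are distinct, the former two are arcs and the latter two are not. -/
def TwoSwitch {V : Type} [DecidableEq V] (G H : SDigraph V) : Prop :=
  ∃ v₁ v₂ v₃ v₄ : V,
    v₁ ≠ v₂ ∧ v₁ ≠ v₃ ∧ v₁ ≠ v₄ ∧ v₂ ≠ v₃ ∧ v₂ ≠ v₄ ∧ v₃ ≠ v₄ ∧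
    G.Adj v₁ v₂ = true ∧ G.Adj v₃ v₄ = true ∧
    G.Adj v₁ v₄ = false ∧ G.Adj v₃ v₂ = false ∧
    ∀ x y, H.Adj x y =
      if (x = v₁ ∧ y = v₂) ∨ (x = v₃ ∧ y = v₄) then false
      else if (x = v₁ ∧ y = v₄) ∨ (x = v₃ ∧ y = v₂) then true
      else G.Adj x y

/-- `G` and `H` differ by a single 2-switch (in either direction). -/
def TwoSwitchStep {V : Type} [DecidableEq V] (G H : SDigraph V) : Prop :=
  TwoSwitch G H ∨ TwoSwitch H G

/-- `H` is reachable from `G` by a finite sequence of 2-switches. -/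
def Reach2 {V : Type} [DecidableEq V] (G H : SDigraph V) : Prop :=
  Relation.ReflTransGen TwoSwitchStep G H

/-- `H` is obtained from `G` by reorienting an induced directed 3-cycle:
there are distinct `u v w` with arcs `(u,v),(v,w),(w,u)` and no arcs
`(v,u),(w,v),(u,w)`, and `H` replaces these three arcs by the reversed ones. -/
def CycleReorient {V : Type} [DecidableEq V] (G H : SDigraph V) : Prop :=
  ∃ u v w : V, u ≠ v ∧ v ≠ w ∧ u ≠ w ∧
    G.Adj u v = true ∧ G.Adj v w = true ∧ G.Adj w u = true ∧
    G.Adj v u = false ∧ G.Adj w v = false ∧ G.Adj u w = false ∧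
    ∀ x y, H.Adj x y =
      if (x = u ∨ x = v ∨ x = w) ∧ (y = u ∨ y = v ∨ y = w) then G.Adj y x
      else G.Adj x y

/-- The three vertices `u, v, w` induce a directed 3-cycle in `G`: the induced
subgraph on them consists of exactly the three arcs of one cyclic orientation. -/
def InducesC3 {V : Type} (G : SDigraph V) (u v w : V) : Prop :=
  (G.Adj u v = true ∧ G.Adj v w = true ∧ G.Adj w u = true ∧
    G.Adj v u = false ∧ G.Adj w v = false ∧ G.Adj u w = false) ∨
  (G.Adj v u = true ∧ G.Adj w v = true ∧ G.Adj u w = true ∧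
    G.Adj u v = false ∧ G.Adj v w = false ∧ G.Adj w u = false)

/-- The digraph obtained from `G` by reversing all arcs among `{u, v, w}`
(and leaving all other arcs unchanged).  When `{u,v,w}` induces a directed
3-cycle in `G`, this is exactly the reorientation of that 3-cycle. -/
def flip3 {V : Type} [DecidableEq V] (G : SDigraph V) (u v w : V) : SDigraph V where
  Adj x y :=
    if (x = u ∨ x = v ∨ x = w) ∧ (y = u ∨ y = v ∨ y = w) then G.Adj y x
    else G.Adj x y
  irrefl := by
    intro x
    try simp only []
    rw [ite_self]
    exact G.irrefl x

set_option linter.unusedSectionVars false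
set_option maxHeartbeats 1000000

namespace RaoAux

variable {V : Type} [Fintype V] [DecidableEq V]



lemma sdext {G H : SDigraph V} (h : ∀ x y, G.Adj x y = H.Adj x y) : G = H := by
  cases G with
  | mk a ha =>
    cases H with
    | mk b hb =>
      have : a = b := by funext x y; exact h x y
      subst this
      rfl

def mset (A B : SDigraph V) : Finset (V × V) :=
  Finset.univ.filter fun p => ¬ (A.Adj p.1 p.2 = B.Adj p.1 p.2)

def delta (A B : SDigraph V) : ℕ := (mset A B).card

lemma delta_comm (A B : SDigraph V) : delta A B = delta B A := by
  unfold delta mset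
  congr 1
  apply Finset.filter_congr
  intro p _
  constructor <;> (intro h h2; exact h h2.symm)

lemma delta_eq_zero {A B : SDigraph V} (h : delta A B = 0) : A = B := by
  have h2 : mset A B = ∅ := Finset.card_eq_zero.mp h
  apply sdext
  intro x y
  by_contra hc
  have : (x, y) ∈ mset A B := by
    simp [mset]
    exact hc
  rw [h2] at this
  exact absurd this (Finset.notMem_empty _)

lemma delta_lt_master (A A' B : SDigraph V) (E : Finset (V × V))
    (hagree : ∀ p ∉ E, A'.Adj p.1 p.2 = A.Adj p.1 p.2)
    (hlt : (E.filter fun p => ¬(A'.Adj p.1 p.2 = B.Adj p.1 p.2)).card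
         < (E.filter fun p => ¬(A.Adj p.1 p.2 = B.Adj p.1 p.2)).card) :
    delta A' B < delta A B := by
  have hsplit : ∀ X : SDigraph V, delta X B =
      (E.filter fun p => ¬(X.Adj p.1 p.2 = B.Adj p.1 p.2)).card
      + ((Finset.univ \ E).filter fun p => ¬(X.Adj p.1 p.2 = B.Adj p.1 p.2)).card := by
    intro X
    rw [delta, mset, ← Finset.card_union_of_disjoint
      (Finset.disjoint_filter_filter Finset.disjoint_sdiff), ← Finset.filter_union]
    congr 1
    ext p
    simp
  have hsame : ((Finset.univ \ E).filter fun p => ¬(A'.Adj p.1 p.2 = B.Adj p.1 p.2))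
      = ((Finset.univ \ E).filter fun p => ¬(A.Adj p.1 p.2 = B.Adj p.1 p.2)) := by
    apply Finset.filter_congr
    intro p hp
    rw [hagree p (Finset.mem_sdiff.mp hp).2]
  rw [hsplit A', hsplit A, hsame]
  exact Nat.add_lt_add_right hlt _

lemma exists_flip {X : Type} [DecidableEq X] {S T : Finset X} (h : S.card = T.card) {x : X}
    (hx : x ∈ S) (hx' : x ∉ T) : ∃ y, y ∈ T ∧ y ∉ S := by
  by_contra hc
  push_neg at hc
  have hTS : T ⊆ S := fun y hy => hc y hy
  have : T = S := Finset.eq_of_subset_of_card_le hTS (le_of_eq h)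
  rw [this] at hx'
  exact hx' hx

lemma card_swap_one {f g : V → Bool} {x y : V} (hxy : x ≠ y) (hfx : f x = true)
    (hfy : f y = false) (hg : ∀ c, g c = if c = x then false else if c = y then true else f c) :
    (Finset.univ.filter fun c => g c = true).card
      = (Finset.univ.filter fun c => f c = true).card := by
  have hset : (Finset.univ.filter fun c => g c = true)
      = insert y ((Finset.univ.filter fun c => f c = true).erase x) := by
    ext c
    by_cases hcx : c = x
    · subst hcx
      simp [hg, hxy, Finset.mem_insert]
    · by_cases hcy : c = y
      · subst hcy
        simp [hg, hcx]
      · simp [hg, hcx, hcy, Finset.mem_insert]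
  rw [hset]
  have hx_mem : x ∈ Finset.univ.filter fun c => f c = true := by simp [hfx]
  have hy_not : y ∉ (Finset.univ.filter fun c => f c = true).erase x := by
    simp [hfy]
  rw [Finset.card_insert_of_notMem hy_not, Finset.card_erase_of_mem hx_mem]
  have : 0 < (Finset.univ.filter fun c => f c = true).card := Finset.card_pos.mpr ⟨x, hx_mem⟩
  omega


def DegEq (A A' : SDigraph V) : Prop :=
  (∀ v, A.outDeg v = A'.outDeg v) ∧ (∀ v, A.inDeg v = A'.inDeg v)

section Swap

variable (A : SDigraph V) (r1 c1 r2 c2 : V)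

def swapG (h14 : r1 ≠ c2) (h23 : r2 ≠ c1) : SDigraph V where
  Adj x y :=
    if (x = r1 ∧ y = c1) ∨ (x = r2 ∧ y = c2) then false
    else if (x = r1 ∧ y = c2) ∨ (x = r2 ∧ y = c1) then true
    else A.Adj x y
  irrefl := by
    intro x
    by_cases h : (x = r1 ∧ x = c1) ∨ (x = r2 ∧ x = c2)
    · simp [h]
    · have h2 : ¬ ((x = r1 ∧ x = c2) ∨ (x = r2 ∧ x = c1)) := by
        rintro (⟨rfl, rfl⟩ | ⟨rfl, rfl⟩)
        · exact h14 rfl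
        · exact h23 rfl
      simp only [h, h2, if_false, if_neg]
      exact A.irrefl x

variable (h14 : r1 ≠ c2) (h23 : r2 ≠ c1)

lemma swapG_adj (x y : V) : (swapG A r1 c1 r2 c2 h14 h23).Adj x y =
    if (x = r1 ∧ y = c1) ∨ (x = r2 ∧ y = c2) then false
    else if (x = r1 ∧ y = c2) ∨ (x = r2 ∧ y = c1) then true
    else A.Adj x y := rfl

variable (h12 : r1 ≠ r2) (h34 : c1 ≠ c2) (h13 : r1 ≠ c1) (h24 : r2 ≠ c2)
variable (ha : A.Adj r1 c1 = true) (hb : A.Adj r2 c2 = true)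
variable (hc : A.Adj r1 c2 = false) (hd : A.Adj r2 c1 = false)

include h12 h34 h13 h14 h23 h24 ha hb hc hd in
lemma twoSwitch_swapG : TwoSwitch A (swapG A r1 c1 r2 c2 h14 h23) :=
  ⟨r1, c1, r2, c2, h13, h12, h14, h23.symm, h34, h24, ha, hb, hc, hd,
    fun _ _ => rfl⟩

include h12 h34 h13 h14 h23 h24 ha hb hc hd in
lemma degEq_swapG : DegEq A (swapG A r1 c1 r2 c2 h14 h23) := by
  constructor
  · intro v
    unfold SDigraph.outDeg
    by_cases hv1 : v = r1
    · subst hv1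
      refine (card_swap_one h34 ha hc ?_).symm
      intro c
      rw [swapG_adj]
      by_cases hcc : c = c1
      · subst hcc; simp [h12]
      · by_cases hcc2 : c = c2
        · subst hcc2; simp [h12, hcc]
        · simp [hcc, hcc2, h12]
    · by_cases hv2 : v = r2
      · subst hv2
        refine (card_swap_one h34.symm hb hd ?_).symm
        intro c
        rw [swapG_adj]
        by_cases hcc : c = c2
        · subst hcc; simp [Ne.symm h12]
        · by_cases hcc2 : c = c1
          · subst hcc2; simp [Ne.symm h12, hcc]
          · simp [hcc, hcc2, Ne.symm h12]
      · have hall : ∀ x, (swapG A r1 c1 r2 c2 h14 h23).Adj v x = A.Adj v x := by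
          intro x
          rw [swapG_adj]
          simp [hv1, hv2]
        simp only [hall]
  · intro v
    unfold SDigraph.inDeg
    by_cases hv1 : v = c1
    · subst hv1
      refine (card_swap_one h12 ha hd ?_).symm
      intro r
      rw [swapG_adj]
      by_cases hrr : r = r1
      · subst hrr; simp [h34]
      · by_cases hrr2 : r = r2
        · subst hrr2; simp [h34, hrr]
        · simp [hrr, hrr2, h34]
    · by_cases hv2 : v = c2
      · subst hv2
        refine (card_swap_one h12.symm hb hc ?_).symm
        intro r
        rw [swapG_adj]
        by_cases hrr : r = r2
        · subst hrr; simp [Ne.symm h34]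
        · by_cases hrr2 : r = r1
          · subst hrr2; simp [Ne.symm h34, hrr]
          · simp [hrr, hrr2, Ne.symm h34]
      · have hall : ∀ x, (swapG A r1 c1 r2 c2 h14 h23).Adj x v = A.Adj x v := by
          intro x
          rw [swapG_adj]
          simp [hv1, hv2, Ne.symm hv1, Ne.symm hv2]
        simp only [hall]

end Swap

section Flip

variable (A : SDigraph V) (u v w : V)

lemma flip3_adj (x y : V) : (flip3 A u v w).Adj x y =
    if (x = u ∨ x = v ∨ x = w) ∧ (y = u ∨ y = v ∨ y = w) then A.Adj y x
    else A.Adj x y := rfl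

variable (huv : u ≠ v) (hvw : v ≠ w) (huw : u ≠ w)
variable (hA1 : A.Adj u v = true) (hA2 : A.Adj v w = true) (hA3 : A.Adj w u = true)
variable (hZ1 : A.Adj v u = false) (hZ2 : A.Adj w v = false) (hZ3 : A.Adj u w = false)

include huv hvw huw hA1 hA2 hA3 hZ1 hZ2 hZ3 in
lemma cycleReorient_flip3 : CycleReorient A (flip3 A u v w) :=
  ⟨u, v, w, huv, hvw, huw, hA1, hA2, hA3, hZ1, hZ2, hZ3, fun _ _ => rfl⟩

include huv hvw huw hA1 hA2 hA3 hZ1 hZ2 hZ3 in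
lemma degEq_flip3 : DegEq A (flip3 A u v w) := by
  constructor
  · intro x
    unfold SDigraph.outDeg
    by_cases hxu : x = u
    · rw [hxu]
      refine (card_swap_one hvw hA1 hZ3 ?_).symm
      intro c
      rw [flip3_adj]
      by_cases h1 : c = v
      · subst h1; simp [hZ1]
      · by_cases h2 : c = w
        · subst h2; simp [hA3, Ne.symm hvw]
        · by_cases h3 : c = u
          · subst h3; simp [h1, h2]
          · simp [h1, h2, h3]
    · by_cases hxv : x = v
      · rw [hxv]
        refine (card_swap_one (Ne.symm huw) hA2 hZ1 ?_).symm
        intro c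
        rw [flip3_adj]
        by_cases h1 : c = w
        · subst h1; simp [hZ2, Ne.symm huw]
        · by_cases h2 : c = u
          · subst h2; simp [hA1, huw]
          · by_cases h3 : c = v
            · subst h3; simp [h1, h2]
            · simp [h1, h2, h3]
      · by_cases hxw : x = w
        · rw [hxw]
          refine (card_swap_one huv hA3 hZ2 ?_).symm
          intro c
          rw [flip3_adj]
          by_cases h1 : c = u
          · subst h1; simp [hZ3, huv]
          · by_cases h2 : c = v
            · subst h2; simp [hA2, Ne.symm huv]
            · by_cases h3 : c = w
              · subst h3; simp [h1, h2]
              · simp [h1, h2, h3]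
        · have hall : ∀ e, (flip3 A u v w).Adj x e = A.Adj x e := by
            intro e
            rw [flip3_adj]
            simp [hxu, hxv, hxw]
          simp only [hall]
  · intro x
    unfold SDigraph.inDeg
    by_cases hxu : x = u
    · rw [hxu]
      refine (card_swap_one (Ne.symm hvw) hA3 hZ1 ?_).symm
      intro r
      rw [flip3_adj]
      by_cases h1 : r = w
      · subst h1; simp [hZ3]
      · by_cases h2 : r = v
        · subst h2; simp [hA1, h1]
        · by_cases h3 : r = u
          · subst h3; simp [h1, h2]
          · simp [h1, h2, h3]
    · by_cases hxv : x = v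
      · rw [hxv]
        refine (card_swap_one huw hA1 hZ2 ?_).symm
        intro r
        rw [flip3_adj]
        by_cases h1 : r = u
        · subst h1; simp [hZ1]
        · by_cases h2 : r = w
          · subst h2; simp [hA2, h1]
          · by_cases h3 : r = v
            · subst h3; simp [h1, h2]
            · simp [h1, h2, h3]
      · by_cases hxw : x = w
        · rw [hxw]
          refine (card_swap_one (Ne.symm huv) hA2 hZ3 ?_).symm
          intro r
          rw [flip3_adj]
          by_cases h1 : r = v
          · subst h1; simp [hZ2]
          · by_cases h2 : r = u
            · subst h2; simp [hA3, h1]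
            · by_cases h3 : r = w
              · subst h3; simp [h1, h2]
              · simp [h1, h2, h3]
        · have hall : ∀ e, (flip3 A u v w).Adj e x = A.Adj e x := by
            intro e
            rw [flip3_adj]
            simp [hxu, hxv, hxw]
          simp only [hall]

end Flip


section Walk

variable (A B : SDigraph V)

def IsAW (m : ℕ) (i j : ℕ → V) : Prop :=
  0 < m ∧ (∀ t, i (t + m) = i t) ∧ (∀ t, j (t + m) = j t) ∧
  (∀ t, A.Adj (i t) (j t) = true ∧ B.Adj (i t) (j t) = false) ∧
  (∀ t, A.Adj (i t) (j (t + 1)) = false ∧ B.Adj (i t) (j (t + 1)) = true)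

variable {A B}

lemma per_mod {m : ℕ} (hm : 0 < m) {f : ℕ → V} (hf : ∀ t, f (t + m) = f t) :
    ∀ t, f t = f (t % m) := by
  intro t
  induction t using Nat.strong_induction_on with
  | _ t ih =>
    by_cases h : t < m
    · rw [Nat.mod_eq_of_lt h]
    · push_neg at h
      have h2 : t - m + m = t := by omega
      have h3 := hf (t - m)
      rw [h2] at h3
      rw [h3, ih (t - m) (by omega), Nat.mod_eq_sub_mod h]

lemma mod_shift {m : ℕ} (hm : 0 < m) (s t : ℕ) :
    (s + (t % m + m - s % m) % m) % m = t % m := by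
  have h1 : s % m ≤ t % m + m :=
    le_trans (le_of_lt (Nat.mod_lt _ hm)) (Nat.le_add_left m (t % m))
  calc (s + (t % m + m - s % m) % m) % m
      = (s + (t % m + m - s % m)) % m := Nat.add_mod_mod ..
    _ = (s % m + (t % m + m - s % m)) % m := (Nat.mod_add_mod ..).symm
    _ = (t % m + m) % m := by rw [Nat.add_sub_cancel' h1]
    _ = t % m % m := Nat.add_mod_right ..
    _ = t % m := Nat.mod_mod_of_dvd _ dvd_rfl

lemma mod_ne_add {m : ℕ} (a k : ℕ) (hk1 : 0 < k) (hk2 : k < m) : a % m ≠ (a + k) % m := by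
  intro heq
  have h1 : Nat.ModEq m (a + 0) (a + k) := by rw [Nat.add_zero]; exact heq
  have h2 : Nat.ModEq m 0 k := Nat.ModEq.add_left_cancel' a h1
  have h3 : 0 % m = k % m := h2
  rw [Nat.zero_mod, Nat.mod_eq_of_lt hk2] at h3
  omega

lemma succ_mod_congr {m : ℕ} {x y : ℕ} (h : x % m = y % m) : (x + 1) % m = (y + 1) % m := by
  rw [← Nat.mod_add_mod, h, Nat.mod_add_mod]

lemma shortX {m : ℕ} {i j : ℕ → V} (h : IsAW A B m i j) (s d : ℕ) (hd : 1 < d)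
    (hp1 : A.Adj (i s) (j (s + d)) = true) (hp2 : B.Adj (i s) (j (s + d)) = false) :
    ∃ i' j', IsAW A B d i' j' := by
  obtain ⟨hm, hpi, hpj, hplus, hminus⟩ := h
  have hd0 : 0 < d := by omega
  refine ⟨fun u => i (s + u % d), fun u => if u % d = 0 then j (s + d) else j (s + u % d),
    hd0, ?_, ?_, ?_, ?_⟩
  · intro t; simp [Nat.add_mod_right]
  · intro t; simp [Nat.add_mod_right]
  · intro t
    beta_reduce
    by_cases h0 : t % d = 0
    · rw [if_pos h0, h0, Nat.add_zero]
      exact ⟨hp1, hp2⟩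
    · rw [if_neg h0]
      exact hplus (s + t % d)
  · intro t
    beta_reduce
    by_cases hlast : t % d = d - 1
    · have h1 : (t + 1) % d = 0 := by
        rw [← Nat.mod_add_mod, hlast, Nat.sub_add_cancel (le_of_lt hd), Nat.mod_self]
      have h5 : ¬ (d - 1 = 0) := by omega
      rw [h1, if_pos rfl, hlast]
      have h3 : s + (d - 1) + 1 = s + d := by omega
      have h4 := hminus (s + (d - 1))
      rw [h3] at h4
      exact h4
    · have hm2 := Nat.mod_lt t hd0
      have h2 : t % d + 1 < d := by omega
      have h1 : (t + 1) % d = t % d + 1 := by rw [← Nat.mod_add_mod]; exact Nat.mod_eq_of_lt h2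
      have h3 : ¬ (t % d + 1 = 0) := by omega
      rw [h1, if_neg h3]
      have h4 := hminus (s + t % d)
      rw [← Nat.add_assoc]
      exact h4

lemma shortY {m : ℕ} {i j : ℕ → V} (h : IsAW A B m i j) (t e : ℕ)
    (hm1 : A.Adj (i (t + e)) (j t) = false) (hm2 : B.Adj (i (t + e)) (j t) = true) :
    ∃ i' j', IsAW A B (e + 1) i' j' := by
  obtain ⟨hm, hpi, hpj, hplus, hminus⟩ := h
  have hd0 : 0 < e + 1 := Nat.succ_pos e
  refine ⟨fun u => i (t + u % (e + 1)), fun u => j (t + u % (e + 1)), hd0, ?_, ?_, ?_, ?_⟩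
  · intro u; simp [Nat.add_mod_right]
  · intro u; simp [Nat.add_mod_right]
  · intro u; exact hplus (t + u % (e + 1))
  · intro u
    beta_reduce
    by_cases hlast : u % (e + 1) = e
    · have h1 : (u + 1) % (e + 1) = 0 := by
        rw [← Nat.mod_add_mod, hlast, Nat.mod_self]
      rw [h1, hlast, Nat.add_zero]
      exact ⟨hm1, hm2⟩
    · have hm2' := Nat.mod_lt u hd0
      have h2 : u % (e + 1) + 1 < e + 1 := by omega
      have h1 : (u + 1) % (e + 1) = u % (e + 1) + 1 := by
        rw [← Nat.mod_add_mod]; exact Nat.mod_eq_of_lt h2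
      rw [h1]
      have h4 := hminus (t + u % (e + 1))
      rw [← Nat.add_assoc]
      exact h4

lemma exists_walk (hdeg : DegEq A B) (hne : delta A B ≠ 0) :
    ∃ m i j, IsAW A B m i j := by
  classical
  have rowpick : ∀ r c, A.Adj r c = true → B.Adj r c = false →
      ∃ c', A.Adj r c' = false ∧ B.Adj r c' = true := by
    intro r c h1 h2
    obtain ⟨y, hy1, hy2⟩ := exists_flip (hdeg.1 r)
      (show c ∈ Finset.univ.filter fun x => A.Adj r x = true by simp [h1])
      (show c ∉ Finset.univ.filter fun x => B.Adj r x = true by simp [h2])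
    simp only [Finset.mem_filter, Finset.mem_univ, true_and] at hy1 hy2
    exact ⟨y, by simpa using hy2, hy1⟩
  have colpick : ∀ r c, A.Adj r c = false → B.Adj r c = true →
      ∃ r', A.Adj r' c = true ∧ B.Adj r' c = false := by
    intro r c h1 h2
    obtain ⟨y, hy1, hy2⟩ := exists_flip (hdeg.2 c).symm
      (show r ∈ Finset.univ.filter fun x => B.Adj x c = true by simp [h2])
      (show r ∉ Finset.univ.filter fun x => A.Adj x c = true by simp [h1])
    simp only [Finset.mem_filter, Finset.mem_univ, true_and] at hy1 hy2
    exact ⟨y, hy1, by simpa using hy2⟩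
  obtain ⟨p0, hp0⟩ : ∃ p : V × V, A.Adj p.1 p.2 = true ∧ B.Adj p.1 p.2 = false := by
    have hnon : (mset A B).Nonempty := Finset.card_pos.mp (Nat.pos_of_ne_zero hne)
    obtain ⟨p, hp⟩ := hnon
    simp only [mset, Finset.mem_filter, Finset.mem_univ, true_and] at hp
    by_cases hA : A.Adj p.1 p.2 = true
    · refine ⟨p, hA, ?_⟩
      cases hB : B.Adj p.1 p.2
      · rfl
      · exact absurd (hA.trans hB.symm) hp
    · have hA' : A.Adj p.1 p.2 = false := by simpa using hA
      have hB : B.Adj p.1 p.2 = true := by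
        cases hB : B.Adj p.1 p.2
        · exact absurd (hA'.trans hB.symm) hp
        · rfl
      obtain ⟨r', h1, h2⟩ := colpick p.1 p.2 hA' hB
      exact ⟨(r', p.2), h1, h2⟩
  let step : V × V → V × V := fun p =>
    if h : A.Adj p.1 p.2 = true ∧ B.Adj p.1 p.2 = false then
      (Classical.choose (colpick p.1 (Classical.choose (rowpick p.1 p.2 h.1 h.2))
          (Classical.choose_spec (rowpick p.1 p.2 h.1 h.2)).1
          (Classical.choose_spec (rowpick p.1 p.2 h.1 h.2)).2),
        Classical.choose (rowpick p.1 p.2 h.1 h.2))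
    else p
  have hstep : ∀ p (hp : A.Adj p.1 p.2 = true ∧ B.Adj p.1 p.2 = false),
      (A.Adj (step p).1 (step p).2 = true ∧ B.Adj (step p).1 (step p).2 = false) ∧
      (A.Adj p.1 (step p).2 = false ∧ B.Adj p.1 (step p).2 = true) := by
    intro p hp
    simp only [step, dif_pos hp]
    have hc' := Classical.choose_spec (rowpick p.1 p.2 hp.1 hp.2)
    have hr' := Classical.choose_spec (colpick p.1 (Classical.choose (rowpick p.1 p.2 hp.1 hp.2)) hc'.1 hc'.2)
    exact ⟨⟨hr'.1, hr'.2⟩, hc'⟩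
  let g : ℕ → V × V := fun n => step^[n] p0
  have hgplus : ∀ n, A.Adj (g n).1 (g n).2 = true ∧ B.Adj (g n).1 (g n).2 = false := by
    intro n
    induction n with
    | zero => exact hp0
    | succ n ih =>
      have hit : g (n + 1) = step (g n) := Function.iterate_succ_apply' step n p0
      rw [hit]
      exact (hstep _ ih).1
  have hglink : ∀ n, A.Adj (g n).1 (g (n + 1)).2 = false ∧ B.Adj (g n).1 (g (n + 1)).2 = true := by
    intro n
    have hit : g (n + 1) = step (g n) := Function.iterate_succ_apply' step n p0
    rw [hit]
    exact (hstep _ (hgplus n)).2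
  obtain ⟨a, b, hab, heq⟩ := Finite.exists_ne_map_eq_of_infinite g
  have hlt : ∃ a b, a < b ∧ g a = g b := by
    rcases lt_or_gt_of_ne hab with h | h
    · exact ⟨a, b, h, heq⟩
    · exact ⟨b, a, h, heq.symm⟩
  obtain ⟨a, b, hab2, heq2⟩ := hlt
  have hm0 : 0 < b - a := by omega
  refine ⟨b - a, fun t => (g (a + t % (b - a))).1, fun t => (g (a + t % (b - a))).2,
    hm0, ?_, ?_, ?_, ?_⟩
  · intro t; simp [Nat.add_mod_right]
  · intro t; simp [Nat.add_mod_right]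
  · intro t; exact hgplus _
  · intro t
    beta_reduce
    by_cases hlast : t % (b - a) = b - a - 1
    · have h1 : (t + 1) % (b - a) = 0 := by
        rw [← Nat.mod_add_mod, hlast, Nat.sub_add_cancel hm0, Nat.mod_self]
      rw [h1, hlast, Nat.add_zero, heq2]
      have e1 : a + (b - a - 1) + 1 = b := by omega
      have h4 := hglink (a + (b - a - 1))
      rw [e1] at h4
      exact h4
    · have hm2' := Nat.mod_lt t hm0
      have h2 : t % (b - a) + 1 < b - a := by omega
      have h1 : (t + 1) % (b - a) = t % (b - a) + 1 := by
        rw [← Nat.mod_add_mod]; exact Nat.mod_eq_of_lt h2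
      rw [h1, ← Nat.add_assoc]
      exact hglink (a + t % (b - a))

end Walk


lemma degEq_symm {X Y : SDigraph V} (h : DegEq X Y) : DegEq Y X :=
  ⟨fun v => (h.1 v).symm, fun v => (h.2 v).symm⟩

lemma degEq_trans {X Y Z : SDigraph V} (h1 : DegEq X Y) (h2 : DegEq Y Z) : DegEq X Z :=
  ⟨fun v => (h1.1 v).trans (h2.1 v), fun v => (h1.2 v).trans (h2.2 v)⟩

lemma card_filter_quad {p : V × V → Prop} [DecidablePred p] {a b c d : V × V}
    (hab : a ≠ b) (hac : a ≠ c) (had : a ≠ d) (hbc : b ≠ c) (hbd : b ≠ d) (hcd : c ≠ d) :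
    (({a, b, c, d} : Finset (V × V)).filter p).card =
      (if p a then 1 else 0) + (if p b then 1 else 0) + (if p c then 1 else 0) +
        (if p d then 1 else 0) := by
  rw [Finset.card_filter]
  rw [show ({a, b, c, d} : Finset (V × V)) = insert a (insert b (insert c {d})) from rfl]
  rw [Finset.sum_insert (by simp [hab, hac, had]), Finset.sum_insert (by simp [hbc, hbd]),
    Finset.sum_insert (by simp [hcd]), Finset.sum_singleton]
  ring

lemma swap_delta_lt (X X' Y : SDigraph V) (r1 c1 r2 c2 : V)
    (h12 : r1 ≠ r2) (h34 : c1 ≠ c2)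
    (hadj : ∀ x y, X'.Adj x y = if (x = r1 ∧ y = c1) ∨ (x = r2 ∧ y = c2) then false
      else if (x = r1 ∧ y = c2) ∨ (x = r2 ∧ y = c1) then true else X.Adj x y)
    (hX11 : X.Adj r1 c1 = true) (hX22 : X.Adj r2 c2 = true)
    (hX12 : X.Adj r1 c2 = false) (hX21 : X.Adj r2 c1 = false)
    {y11 y22 y12 y21 : Bool}
    (hY11 : Y.Adj r1 c1 = y11) (hY22 : Y.Adj r2 c2 = y22)
    (hY12 : Y.Adj r1 c2 = y12) (hY21 : Y.Adj r2 c1 = y21)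
    (hcount : ((if ¬((false : Bool) = y11) then 1 else 0) + (if ¬((false : Bool) = y22) then 1 else 0) +
        (if ¬((true : Bool) = y12) then 1 else 0) + (if ¬((true : Bool) = y21) then 1 else 0) : ℕ) <
      (if ¬((true : Bool) = y11) then 1 else 0) + (if ¬((true : Bool) = y22) then 1 else 0) +
        (if ¬((false : Bool) = y12) then 1 else 0) + (if ¬((false : Bool) = y21) then 1 else 0)) :
    delta X' Y < delta X Y := by
  have hab : ((r1, c1) : V × V) ≠ (r2, c2) := fun h => h12 (congrArg Prod.fst h)
  have hac : ((r1, c1) : V × V) ≠ (r1, c2) := fun h => h34 (congrArg Prod.snd h)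
  have had : ((r1, c1) : V × V) ≠ (r2, c1) := fun h => h12 (congrArg Prod.fst h)
  have hbc : ((r2, c2) : V × V) ≠ (r1, c2) := fun h => h12 (congrArg Prod.fst h).symm
  have hbd : ((r2, c2) : V × V) ≠ (r2, c1) := fun h => h34 (congrArg Prod.snd h).symm
  have hcd : ((r1, c2) : V × V) ≠ (r2, c1) := fun h => h12 (congrArg Prod.fst h)
  apply delta_lt_master X X' Y {(r1, c1), (r2, c2), (r1, c2), (r2, c1)}
  · intro p hp
    simp only [Finset.mem_insert, Finset.mem_singleton, not_or] at hp
    obtain ⟨hp1, hp2, hp3, hp4⟩ := hp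
    rw [hadj]
    rw [if_neg, if_neg]
    · rintro (⟨e1, e2⟩ | ⟨e1, e2⟩)
      · exact hp3 (Prod.ext e1 e2)
      · exact hp4 (Prod.ext e1 e2)
    · rintro (⟨e1, e2⟩ | ⟨e1, e2⟩)
      · exact hp1 (Prod.ext e1 e2)
      · exact hp2 (Prod.ext e1 e2)
  · have e11 : X'.Adj r1 c1 = false := by rw [hadj]; simp
    have e22 : X'.Adj r2 c2 = false := by rw [hadj]; simp
    have e12 : X'.Adj r1 c2 = true := by rw [hadj]; simp [Ne.symm h34, h12]
    have e21 : X'.Adj r2 c1 = true := by rw [hadj]; simp [h34, Ne.symm h12]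
    rw [card_filter_quad hab hac had hbc hbd hcd, card_filter_quad hab hac had hbc hbd hcd]
    simp only [e11, e22, e12, e21, hX11, hX22, hX12, hX21, hY11, hY22, hY12, hY21]
    exact hcount

lemma flip_delta_lt (X Y : SDigraph V) (u v w : V)
    (huv : u ≠ v) (hvw : v ≠ w) (huw : u ≠ w)
    (hX1 : X.Adj u v = true) (hX2 : X.Adj v w = true) (hX3 : X.Adj w u = true)
    (hZ1 : X.Adj v u = false) (hZ2 : X.Adj w v = false) (hZ3 : X.Adj u w = false)
    (hY1 : Y.Adj u v = false) (hY2 : Y.Adj v w = false) (hY3 : Y.Adj w u = false)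
    (hW1 : Y.Adj v u = true) (hW2 : Y.Adj w v = true) (hW3 : Y.Adj u w = true) :
    delta (flip3 X u v w) Y < delta X Y := by
  apply delta_lt_master X (flip3 X u v w) Y {(u,v),(v,w),(w,u),(v,u),(w,v),(u,w)}
  · intro p hp
    simp only [Finset.mem_insert, Finset.mem_singleton, not_or] at hp
    obtain ⟨h1, h2, h3, h4, h5, h6⟩ := hp
    by_cases hc : (p.1 = u ∨ p.1 = v ∨ p.1 = w) ∧ (p.2 = u ∨ p.2 = v ∨ p.2 = w)
    · have hdg : p.1 = p.2 := by
        obtain ⟨hx, hy⟩ := hc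
        rcases hx with e1 | e1 | e1 <;> rcases hy with e2 | e2 | e2
        · exact e1.trans e2.symm
        · exact absurd (Prod.ext e1 e2) h1
        · exact absurd (Prod.ext e1 e2) h6
        · exact absurd (Prod.ext e1 e2) h4
        · exact e1.trans e2.symm
        · exact absurd (Prod.ext e1 e2) h2
        · exact absurd (Prod.ext e1 e2) h3
        · exact absurd (Prod.ext e1 e2) h5
        · exact e1.trans e2.symm
      rw [flip3_adj, if_pos hc, hdg]
    · rw [flip3_adj, if_neg hc]
  · have hzero : (({((u,v) : V × V),(v,w),(w,u),(v,u),(w,v),(u,w)} : Finset (V × V)).filter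
        fun p => ¬((flip3 X u v w).Adj p.1 p.2 = Y.Adj p.1 p.2)).card = 0 := by
      rw [Finset.card_eq_zero, Finset.filter_eq_empty_iff]
      intro p hp
      rw [not_not]
      simp only [Finset.mem_insert, Finset.mem_singleton] at hp
      rcases hp with rfl | rfl | rfl | rfl | rfl | rfl <;>
        simp [flip3_adj, hZ1, hZ2, hZ3, hX1, hX2, hX3, hY1, hY2, hY3, hW1, hW2, hW3]
    rw [hzero]
    apply Finset.card_pos.mpr
    exact ⟨(u, v), Finset.mem_filter.mpr ⟨by simp, by simp [hX1, hY1]⟩⟩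

lemma improve {A B : SDigraph V} (hdeg : DegEq A B) (hne : delta A B ≠ 0) :
    (∃ A', (TwoSwitch A A' ∨ CycleReorient A A') ∧ DegEq A' B ∧ delta A' B < delta A B) ∨
    (∃ B', (TwoSwitch B B' ∨ CycleReorient B B') ∧ DegEq A B' ∧ delta A B' < delta A B) := by
  classical
  have hPex : ∃ n, ∃ i j, IsAW A B n i j := exists_walk hdeg hne
  obtain ⟨i, j, hw⟩ := Nat.find_spec hPex
  set m := Nat.find hPex with hmdef
  have hmin : ∀ d, d < m → ∀ i' j', ¬ IsAW A B d i' j' := by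
    intro d hd i' j' hw'
    exact Nat.find_min hPex hd ⟨i', j', hw'⟩
  have hm0 : 0 < m := hw.1
  have hpi := hw.2.1
  have hpj := hw.2.2.1
  have hplus := hw.2.2.2.1
  have hminus := hw.2.2.2.2
  have imod : ∀ t, i t = i (t % m) := per_mod hm0 hpi
  have jmod : ∀ t, j t = j (t % m) := per_mod hm0 hpj
  have hm1 : 1 < m := by
    by_contra hc
    have hmeq : m = 1 := by omega
    have hj : j 1 = j 0 := by
      have := hpj 0
      rw [hmeq] at this
      simpa using this
    have h1 := (hplus 0).1
    have h2 := (hminus 0).1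
    rw [hj, h1] at h2
    exact Bool.noConfusion h2
  have inj_i : ∀ a b, i a = i b → a % m = b % m := by
    intro a b hiab
    by_contra hne2
    have hsh := mod_shift hm0 (b + 1) a
    set e := (a % m + m - (b + 1) % m) % m with he
    have hie : i (b + 1 + e) = i a := by rw [imod (b + 1 + e), hsh, ← imod a]
    have h1 : A.Adj (i (b + 1 + e)) (j (b + 1)) = false := by
      rw [hie, hiab]; exact (hminus b).1
    have h2 : B.Adj (i (b + 1 + e)) (j (b + 1)) = true := by
      rw [hie, hiab]; exact (hminus b).2
    obtain ⟨i', j', hw'⟩ := shortY ⟨hm0, hpi, hpj, hplus, hminus⟩ (b + 1) e h1 h2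
    have helt : e < m := Nat.mod_lt _ hm0
    have hene : e ≠ m - 1 := by
      intro heq
      rw [heq] at hsh
      rw [show b + 1 + (m - 1) = b + m by omega, Nat.add_mod_right] at hsh
      exact hne2 hsh.symm
    exact hmin (e + 1) (by omega) i' j' hw'
  have inj_j : ∀ a b, j a = j b → a % m = b % m := by
    intro a b hjab
    by_contra hne2
    have hsh := mod_shift hm0 b (a + m - 1)
    set e := ((a + m - 1) % m + m - b % m) % m with he
    have hie : i (b + e) = i (a + m - 1) := by rw [imod (b + e), hsh, ← imod (a + m - 1)]
    have hjm : j (a + m - 1 + 1) = j a := by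
      rw [show a + m - 1 + 1 = a + m by omega, hpj a]
    have h1 : A.Adj (i (b + e)) (j b) = false := by
      rw [hie, ← hjab, ← hjm]; exact (hminus (a + m - 1)).1
    have h2 : B.Adj (i (b + e)) (j b) = true := by
      rw [hie, ← hjab, ← hjm]; exact (hminus (a + m - 1)).2
    obtain ⟨i', j', hw'⟩ := shortY ⟨hm0, hpi, hpj, hplus, hminus⟩ b e h1 h2
    have helt : e < m := Nat.mod_lt _ hm0
    have hene : e ≠ m - 1 := by
      intro heq
      rw [heq] at hsh
      have h3 := succ_mod_congr hsh
      rw [show b + (m - 1) + 1 = b + m by omega, show a + m - 1 + 1 = a + m by omega,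
        Nat.add_mod_right, Nat.add_mod_right] at h3
      exact hne2 h3.symm
    exact hmin (e + 1) (by omega) i' j' hw'
  have chord : ∀ s t, t % m ≠ s % m → t % m ≠ (s + 1) % m →
      A.Adj (i s) (j t) = B.Adj (i s) (j t) := by
    intro s t h1 h2
    cases hA : A.Adj (i s) (j t) <;> cases hB : B.Adj (i s) (j t)
    · rfl
    · exfalso
      have hsh := mod_shift hm0 t s
      set e := (s % m + m - t % m) % m with he
      have hie : i (t + e) = i s := by rw [imod (t + e), hsh, ← imod s]
      obtain ⟨i', j', hw'⟩ := shortY ⟨hm0, hpi, hpj, hplus, hminus⟩ t e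
        (by rw [hie]; exact hA) (by rw [hie]; exact hB)
      have helt : e < m := Nat.mod_lt _ hm0
      have hene : e ≠ m - 1 := by
        intro heq
        rw [heq] at hsh
        have h3 := succ_mod_congr hsh
        rw [show t + (m - 1) + 1 = t + m by omega, Nat.add_mod_right] at h3
        exact h2 h3
      exact hmin (e + 1) (by omega) i' j' hw'
    · exfalso
      have hsh := mod_shift hm0 s t
      set d := (t % m + m - s % m) % m with hdd
      have hd0 : d ≠ 0 := by
        intro h0
        rw [h0, Nat.add_zero] at hsh
        exact h1 hsh.symm
      have hd1 : d ≠ 1 := by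
        intro h0
        rw [h0] at hsh
        exact h2 hsh.symm
      have hjd : j (s + d) = j t := by rw [jmod (s + d), hsh, ← jmod t]
      obtain ⟨i', j', hw'⟩ := shortX ⟨hm0, hpi, hpj, hplus, hminus⟩ s d (by omega)
        (by rw [hjd]; exact hA) (by rw [hjd]; exact hB)
      exact hmin d (Nat.mod_lt _ hm0) i' j' hw'
    · rfl
  have nii : ∀ s k, 0 < k → k < m → i s ≠ i (s + k) := by
    intro s k hk1 hk2 h
    exact mod_ne_add s k hk1 hk2 (inj_i s (s + k) h)
  have njj : ∀ s k, 0 < k → k < m → j s ≠ j (s + k) := by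
    intro s k hk1 hk2 h
    exact mod_ne_add s k hk1 hk2 (inj_j s (s + k) h)
  have nij : ∀ s, i s ≠ j s := by
    intro s h
    have h1 := (hplus s).1
    rw [h, A.irrefl] at h1
    exact Bool.noConfusion h1
  have nijm : ∀ s, i s ≠ j (s + 1) := by
    intro s h
    have h1 := (hminus s).2
    rw [h, B.irrefl] at h1
    exact Bool.noConfusion h1
  by_cases hm2 : m = 2
  · -- minimal walk of length 2 : a direct 2-switch on A
    left
    have hj2 : j 2 = j 0 := by
      have := hpj 0
      rw [hm2] at this
      simpa using this
    have f11 := (hplus 0).1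
    have f22 := (hplus 1).1
    have f12 := (hminus 0).1
    have f21 : A.Adj (i 1) (j 0) = false := by
      have := (hminus 1).1
      rwa [hj2] at this
    have g11 := (hplus 0).2
    have g22 := (hplus 1).2
    have g12 := (hminus 0).2
    have g21 : B.Adj (i 1) (j 0) = true := by
      have := (hminus 1).2
      rwa [hj2] at this
    have d12 : i 0 ≠ i 1 := nii 0 1 one_pos (by omega)
    have d34 : j 0 ≠ j 1 := njj 0 1 one_pos (by omega)
    have d13 : i 0 ≠ j 0 := nij 0
    have d14 : i 0 ≠ j 1 := nijm 0
    have d23 : i 1 ≠ j 0 := by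
      intro h
      apply nijm 1
      rw [hj2]
      exact h
    have d24 : i 1 ≠ j 1 := nij 1
    refine ⟨swapG A (i 0) (j 0) (i 1) (j 1) d14 d23, Or.inl ?_, ?_, ?_⟩
    · exact twoSwitch_swapG A _ _ _ _ d14 d23 d12 d34 d13 d24 f11 f22 f12 f21
    · exact degEq_trans (degEq_symm (degEq_swapG A _ _ _ _ d14 d23 d12 d34 d13 d24 f11 f22 f12 f21)) hdeg
    · exact swap_delta_lt A _ B _ _ _ _ d12 d34 (fun _ _ => rfl) f11 f22 f12 f21 g11 g22 g12 g21 (by decide)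
  · have hm3 : 3 ≤ m := by omega
    by_cases hdiag : ∀ s, s < m → i (s + 1) = j s
    · have hdiag' : ∀ s : ℕ, i (s + 1) = j s := by
        intro s
        have h1 : i (s + 1) = i (s % m + 1) := by
          rw [imod (s + 1), imod (s % m + 1), Nat.mod_add_mod]
        rw [h1, jmod s]
        exact hdiag (s % m) (Nat.mod_lt _ hm0)
      have plus' : ∀ t, A.Adj (i t) (i (t + 1)) = true ∧ B.Adj (i t) (i (t + 1)) = false := by
        intro t; rw [hdiag' t]; exact hplus t
      have minus' : ∀ t, A.Adj (i t) (i (t + 1 + 1)) = false ∧ B.Adj (i t) (i (t + 1 + 1)) = true := by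
        intro t; rw [hdiag' (t + 1)]; exact hminus t
      by_cases hm3e : m = 3
      · -- induced directed triangle : reorient it
        left
        have hi3 : i 3 = i 0 := by
          have := hpi 0
          rw [hm3e] at this
          simpa using this
        have hi4 : i 4 = i 1 := by
          have := hpi 1
          rw [hm3e] at this
          simpa using this
        have huv : i 0 ≠ i 1 := nii 0 1 one_pos (by omega)
        have hvw : i 1 ≠ i 2 := by
          have := nii 1 1 one_pos (by omega)
          simpa using this
        have huw : i 0 ≠ i 2 := nii 0 2 (by omega) (by omega)
        have hA1 : A.Adj (i 0) (i 1) = true := (plus' 0).1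
        have hA2 : A.Adj (i 1) (i 2) = true := (plus' 1).1
        have hA3 : A.Adj (i 2) (i 0) = true := by
          have : A.Adj (i 2) (i 3) = true := (plus' 2).1
          rwa [hi3] at this
        have hZ1 : A.Adj (i 1) (i 0) = false := by
          have : A.Adj (i 1) (i 3) = false := (minus' 1).1
          rwa [hi3] at this
        have hZ2 : A.Adj (i 2) (i 1) = false := by
          have : A.Adj (i 2) (i 4) = false := (minus' 2).1
          rwa [hi4] at this
        have hZ3 : A.Adj (i 0) (i 2) = false := (minus' 0).1
        have hY1 : B.Adj (i 0) (i 1) = false := (plus' 0).2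
        have hY2 : B.Adj (i 1) (i 2) = false := (plus' 1).2
        have hY3 : B.Adj (i 2) (i 0) = false := by
          have : B.Adj (i 2) (i 3) = false := (plus' 2).2
          rwa [hi3] at this
        have hW1 : B.Adj (i 1) (i 0) = true := by
          have : B.Adj (i 1) (i 3) = true := (minus' 1).2
          rwa [hi3] at this
        have hW2 : B.Adj (i 2) (i 1) = true := by
          have : B.Adj (i 2) (i 4) = true := (minus' 2).2
          rwa [hi4] at this
        have hW3 : B.Adj (i 0) (i 2) = true := (minus' 0).2
        refine ⟨flip3 A (i 0) (i 1) (i 2), Or.inr ?_, ?_, ?_⟩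
        · exact cycleReorient_flip3 A _ _ _ huv hvw huw hA1 hA2 hA3 hZ1 hZ2 hZ3
        · exact degEq_trans (degEq_symm (degEq_flip3 A _ _ _ huv hvw huw hA1 hA2 hA3 hZ1 hZ2 hZ3)) hdeg
        · exact flip_delta_lt A B _ _ _ huv hvw huw hA1 hA2 hA3 hZ1 hZ2 hZ3 hY1 hY2 hY3 hW1 hW2 hW3
      · -- all-diagonal, m ≥ 4
        have hm4 : 4 ≤ m := by omega
        have hgam : A.Adj (i 0) (i 3) = B.Adj (i 0) (i 3) := by
          have hc0 := chord 0 2 ?_ ?_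
          · rwa [← hdiag' 2] at hc0
          · rw [Nat.mod_eq_of_lt (by omega), Nat.zero_mod]; omega
          · rw [Nat.mod_eq_of_lt (by omega), Nat.mod_eq_of_lt (by omega)] <;> omega
        have n01 : i 0 ≠ i 1 := nii 0 1 one_pos (by omega)
        have n02 : i 0 ≠ i 2 := nii 0 2 (by omega) (by omega)
        have n03 : i 0 ≠ i 3 := nii 0 3 (by omega) (by omega)
        have n12 : i 1 ≠ i 2 := by
          have := nii 1 1 one_pos (by omega)
          simpa using this
        have n13 : i 1 ≠ i 3 := by
          have := nii 1 2 (by omega) (by omega)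
          simpa using this
        have n23 : i 2 ≠ i 3 := by
          have := nii 2 1 one_pos (by omega)
          simpa using this
        have gA02 : A.Adj (i 0) (i 2) = false := (minus' 0).1
        have gA13 : A.Adj (i 1) (i 3) = false := (minus' 1).1
        have gA12 : A.Adj (i 1) (i 2) = true := (plus' 1).1
        have gB02 : B.Adj (i 0) (i 2) = true := (minus' 0).2
        have gB13 : B.Adj (i 1) (i 3) = true := (minus' 1).2
        have gB12 : B.Adj (i 1) (i 2) = false := (plus' 1).2
        cases hgamv : A.Adj (i 0) (i 3)
        · -- chord empty on both sides : 2-switch on B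
          right
          have gB03 : B.Adj (i 0) (i 3) = false := by rw [← hgam]; exact hgamv
          refine ⟨swapG B (i 0) (i 2) (i 1) (i 3) n03 n12, Or.inl ?_, ?_, ?_⟩
          · exact twoSwitch_swapG B _ _ _ _ n03 n12 n01 n23 n02 n13 gB02 gB13 gB03 gB12
          · exact degEq_trans hdeg (degEq_swapG B _ _ _ _ n03 n12 n01 n23 n02 n13 gB02 gB13 gB03 gB12)
          · have hlt := swap_delta_lt B (swapG B (i 0) (i 2) (i 1) (i 3) n03 n12) A
              (i 0) (i 2) (i 1) (i 3) n01 n23 (fun _ _ => rfl)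
              gB02 gB13 gB03 gB12 gA02 gA13 hgamv gA12 (by decide)
            rw [delta_comm A _, delta_comm A B]
            exact hlt
        · -- chord present on both sides : 2-switch on A
          left
          have gA03 : A.Adj (i 0) (i 3) = true := hgamv
          have gB03 : B.Adj (i 0) (i 3) = true := by rw [← hgam]; exact hgamv
          refine ⟨swapG A (i 0) (i 3) (i 1) (i 2) n02 n13, Or.inl ?_, ?_, ?_⟩
          · exact twoSwitch_swapG A _ _ _ _ n02 n13 n01 (Ne.symm n23) n03 n12 gA03 gA12 gA02 gA13
          · exact degEq_trans (degEq_symm (degEq_swapG A _ _ _ _ n02 n13 n01 (Ne.symm n23) n03 n12 gA03 gA12 gA02 gA13)) hdeg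
          · exact swap_delta_lt A _ B _ _ _ _ n01 (Ne.symm n23) (fun _ _ => rfl)
              gA03 gA12 gA02 gA13 gB03 gB12 gB02 gB13 (by decide)
    · -- some non-diagonal adjacent chord
      push_neg at hdiag
      obtain ⟨s, hsm, hsne⟩ := hdiag
      have hch : A.Adj (i (s + 1)) (j s) = B.Adj (i (s + 1)) (j s) := by
        apply chord (s + 1) s
        · exact mod_ne_add s 1 one_pos hm1
        · have h2m : (2 : ℕ) < m := by omega
          have hx := mod_ne_add s 2 two_pos h2m
          simpa [show s + 1 + 1 = s + 2 from rfl] using hx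
      have f11 := (hplus s).1
      have f22 := (hplus (s + 1)).1
      have f12 := (hminus s).1
      have g11 := (hplus s).2
      have g22 := (hplus (s + 1)).2
      have g12 := (hminus s).2
      have d12 : i s ≠ i (s + 1) := nii s 1 one_pos hm1
      have d34 : j s ≠ j (s + 1) := njj s 1 one_pos hm1
      have d13 : i s ≠ j s := nij s
      have d14 : i s ≠ j (s + 1) := nijm s
      have d24 : i (s + 1) ≠ j (s + 1) := nij (s + 1)
      have d23 : i (s + 1) ≠ j s := hsne
      cases hbv : A.Adj (i (s + 1)) (j s)
      · left
        have f21 : A.Adj (i (s + 1)) (j s) = false := hbv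
        have g21 : B.Adj (i (s + 1)) (j s) = false := by rw [← hch]; exact hbv
        refine ⟨swapG A (i s) (j s) (i (s + 1)) (j (s + 1)) d14 d23, Or.inl ?_, ?_, ?_⟩
        · exact twoSwitch_swapG A _ _ _ _ d14 d23 d12 d34 d13 d24 f11 f22 f12 f21
        · exact degEq_trans (degEq_symm (degEq_swapG A _ _ _ _ d14 d23 d12 d34 d13 d24 f11 f22 f12 f21)) hdeg
        · exact swap_delta_lt A _ B _ _ _ _ d12 d34 (fun _ _ => rfl) f11 f22 f12 f21 g11 g22 g12 g21 (by decide)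
      · right
        have f21 : A.Adj (i (s + 1)) (j s) = true := hbv
        have g21 : B.Adj (i (s + 1)) (j s) = true := by rw [← hch]; exact hbv
        refine ⟨swapG B (i s) (j (s + 1)) (i (s + 1)) (j s) d13 d24, Or.inl ?_, ?_, ?_⟩
        · exact twoSwitch_swapG B _ _ _ _ d13 d24 d12 (Ne.symm d34) d14 d23 g12 g21 g11 g22
        · exact degEq_trans hdeg (degEq_swapG B _ _ _ _ d13 d24 d12 (Ne.symm d34) d14 d23 g12 g21 g11 g22)
        · have hlt := swap_delta_lt B (swapG B (i s) (j (s + 1)) (i (s + 1)) (j s) d13 d24) A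
            (i s) (j (s + 1)) (i (s + 1)) (j s) d12 (Ne.symm d34) (fun _ _ => rfl)
            g12 g21 g11 g22 f12 f21 f11 f22 (by decide)
          rw [delta_comm A _, delta_comm A B]
          exact hlt


lemma reach : ∀ n (A B : SDigraph V), DegEq A B → delta A B ≤ n →
    Relation.ReflTransGen
      (fun X Y => TwoSwitch X Y ∨ TwoSwitch Y X ∨
        CycleReorient X Y ∨ CycleReorient Y X) A B := by
  intro n
  induction n with
  | zero =>
    intro A B _ hle
    have hAB : A = B := delta_eq_zero (Nat.le_zero.mp hle)
    subst hAB
    exact Relation.ReflTransGen.refl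
  | succ n ih =>
    intro A B hdeg hle
    by_cases h0 : delta A B = 0
    · have hAB : A = B := delta_eq_zero h0
      subst hAB
      exact Relation.ReflTransGen.refl
    · rcases improve hdeg h0 with ⟨A', hmove, hdeg', hlt⟩ | ⟨B', hmove, hdeg', hlt⟩
      · refine Relation.ReflTransGen.head ?_ (ih A' B hdeg' (by omega))
        rcases hmove with h | h
        · exact Or.inl h
        · exact Or.inr (Or.inr (Or.inl h))
      · refine Relation.ReflTransGen.tail (ih A B' hdeg' (by omega)) ?_
        rcases hmove with h | h
        · exact Or.inr (Or.inl h)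
        · exact Or.inr (Or.inr (Or.inr h))


end RaoAux

/-- Rao et al.: for a digraphic integer-pair sequence `d`,
any two realizations of `d` are connected by a finite sequence of moves, each
a 2-switch or a directed 3-cycle reorientation; i.e. the meta-graph `Ω_d` is
connected. -/
theorem statement0 {N : ℕ} (d : Fin N → ℕ × ℕ)
    (hd : ∃ G : SDigraph (Fin N), Realizes G d)
    (G H : SDigraph (Fin N)) (hG : Realizes G d) (hH : Realizes H d) :
    Relation.ReflTransGen
      (fun X Y => TwoSwitch X Y ∨ TwoSwitch Y X ∨
        CycleReorient X Y ∨ CycleReorient Y X) G H := by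
  have hdeg : RaoAux.DegEq G H :=
    ⟨fun v => ((hG v).1).trans ((hH v).1).symm, fun v => ((hG v).2).trans ((hH v).2).symm⟩
  exact RaoAux.reach (RaoAux.delta G H) G H hdeg le_rfl
end

section
/- Let d be a digraphic integer-pair sequence such that the 2-switch meta-graph Ω'_d is disconnected. Then there exist a realization G ∈ R(d), three distinct vertices u, v, w with (u,v),(v,w),(w,u) arcs of G and (v,u),(w,v),(u,w) not arcs of G, such that the realization G' obtained from G by reorienting this directed 3-cycle is not reachable from G by any finite sequence of 2-switches. -/
namespace S4P
set_option linter.unusedSectionVars false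

variable {V : Type} [Fintype V] [DecidableEq V]

lemma sd_ext {G H : SDigraph V} (h : G.Adj = H.Adj) : G = H := by
  cases G; cases H; simpa using h

/-- mismatch counter -/
def ms (b c : Bool) : ℕ := if b = c then 0 else 1

def dist (G H : SDigraph V) : ℕ :=
  ∑ p : V × V, ms (G.Adj p.1 p.2) (H.Adj p.1 p.2)

lemma dist_comm (G H : SDigraph V) : dist G H = dist H G := by
  unfold dist
  refine Finset.sum_congr rfl fun p _ => ?_
  unfold ms
  by_cases h : G.Adj p.1 p.2 = H.Adj p.1 p.2
  · simp [h]
  · have h2 : ¬ H.Adj p.1 p.2 = G.Adj p.1 p.2 := fun hh => h hh.symm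
    simp [h, h2]

lemma eq_of_dist_eq_zero {G H : SDigraph V} (h : dist G H = 0) : G = H := by
  apply sd_ext; funext a b
  by_contra hab
  rw [dist, Finset.sum_eq_zero_iff] at h
  have := h (a, b) (Finset.mem_univ _)
  unfold ms at this
  simp [hab] at this

lemma dist_lt_of_sum_lt (G G' H : SDigraph V) (S : Finset (V × V))
    (hout : ∀ p ∉ S, G'.Adj p.1 p.2 = G.Adj p.1 p.2)
    (hin : ∑ p ∈ S, ms (G'.Adj p.1 p.2) (H.Adj p.1 p.2) <
      ∑ p ∈ S, ms (G.Adj p.1 p.2) (H.Adj p.1 p.2)) :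
    dist G' H < dist G H := by
  unfold dist
  have hsub : S ⊆ Finset.univ := Finset.subset_univ S
  rw [← Finset.sum_sdiff hsub (f := fun p => ms (G'.Adj p.1 p.2) (H.Adj p.1 p.2)),
    ← Finset.sum_sdiff hsub (f := fun p => ms (G.Adj p.1 p.2) (H.Adj p.1 p.2))]
  have heq : ∑ p ∈ Finset.univ \ S, ms (G'.Adj p.1 p.2) (H.Adj p.1 p.2)
      = ∑ p ∈ Finset.univ \ S, ms (G.Adj p.1 p.2) (H.Adj p.1 p.2) :=
    Finset.sum_congr rfl fun p hp => by rw [hout p (Finset.mem_sdiff.mp hp).2]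
  omega

end S4P
namespace S4P
variable {V : Type} [Fintype V] [DecidableEq V]
set_option linter.unusedSectionVars false

def swapD (G : SDigraph V) (v1 v2 v3 v4 : V)
    (h12 : v1 ≠ v2) (h14 : v1 ≠ v4) (h32 : v3 ≠ v2) (h34 : v3 ≠ v4) : SDigraph V where
  Adj x y :=
    if (x = v1 ∧ y = v2) ∨ (x = v3 ∧ y = v4) then false
    else if (x = v1 ∧ y = v4) ∨ (x = v3 ∧ y = v2) then true
    else G.Adj x y
  irrefl v := by
    by_cases h1 : (v = v1 ∧ v = v2) ∨ (v = v3 ∧ v = v4)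
    · simp [h1]
    · have h2 : ¬ ((v = v1 ∧ v = v4) ∨ (v = v3 ∧ v = v2)) := by
        rintro (⟨rfl, rfl⟩ | ⟨rfl, rfl⟩)
        · exact h14 rfl
        · exact h32 rfl
      simp only [h1, h2, if_false]
      exact G.irrefl v

lemma swapD_adj (G : SDigraph V) (v1 v2 v3 v4 : V) (h12 h14 h32 h34) (x y : V) :
    (swapD G v1 v2 v3 v4 h12 h14 h32 h34).Adj x y =
      if (x = v1 ∧ y = v2) ∨ (x = v3 ∧ y = v4) then false
      else if (x = v1 ∧ y = v4) ∨ (x = v3 ∧ y = v2) then true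
      else G.Adj x y := rfl

lemma twoSwitch_swapD (G : SDigraph V) (v1 v2 v3 v4 : V)
    (h12 : v1 ≠ v2) (h13 : v1 ≠ v3) (h14 : v1 ≠ v4) (h23 : v2 ≠ v3) (h24 : v2 ≠ v4)
    (h34 : v3 ≠ v4) (a12 : G.Adj v1 v2 = true) (a34 : G.Adj v3 v4 = true)
    (a14 : G.Adj v1 v4 = false) (a32 : G.Adj v3 v2 = false) :
    TwoSwitch G (swapD G v1 v2 v3 v4 h12 h14 (fun h => h23 h.symm) h34) :=
  ⟨v1, v2, v3, v4, h12, h13, h14, h23, h24, h34, a12, a34, a14, a32,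
    fun _ _ => rfl⟩

/-- helper: if the out-neighbourhood of `a` loses `b` and gains `c`, outdeg is kept. -/
lemma outDeg_aux (G G' : SDigraph V) (a b c : V) (hb : G.Adj a b = true)
    (hc : G.Adj a c = false) (hbc : b ≠ c)
    (hform : ∀ y, G'.Adj a y = if y = b then false else if y = c then true else G.Adj a y) :
    G'.outDeg a = G.outDeg a := by
  unfold SDigraph.outDeg
  have hset : (Finset.univ.filter fun y => G'.Adj a y = true)
      = insert c ((Finset.univ.filter fun y => G.Adj a y = true).erase b) := by
    ext y
    simp only [Finset.mem_filter, Finset.mem_univ, true_and, Finset.mem_insert,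
      Finset.mem_erase, hform y]
    by_cases hyb : y = b
    · subst hyb
      simp [hbc, hc, fun h : y = c => hbc h]
    · by_cases hyc : y = c
      · subst hyc; simp [hyb]
      · simp [hyb, hyc]
  rw [hset]
  have hcmem : c ∉ (Finset.univ.filter fun y => G.Adj a y = true).erase b := by
    simp [hc]
  have hbmem : b ∈ (Finset.univ.filter fun y => G.Adj a y = true) := by simp [hb]
  rw [Finset.card_insert_of_notMem hcmem, Finset.card_erase_of_mem hbmem]
  have : 0 < (Finset.univ.filter fun y => G.Adj a y = true).card :=
    Finset.card_pos.mpr ⟨b, hbmem⟩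
  omega

lemma inDeg_aux (G G' : SDigraph V) (a b c : V) (hb : G.Adj b a = true)
    (hc : G.Adj c a = false) (hbc : b ≠ c)
    (hform : ∀ x, G'.Adj x a = if x = b then false else if x = c then true else G.Adj x a) :
    G'.inDeg a = G.inDeg a := by
  unfold SDigraph.inDeg
  have hset : (Finset.univ.filter fun x => G'.Adj x a = true)
      = insert c ((Finset.univ.filter fun x => G.Adj x a = true).erase b) := by
    ext x
    simp only [Finset.mem_filter, Finset.mem_univ, true_and, Finset.mem_insert,
      Finset.mem_erase, hform x]
    by_cases hyb : x = b
    · subst hyb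
      simp [hbc, hc, fun h : x = c => hbc h]
    · by_cases hyc : x = c
      · subst hyc; simp [hyb]
      · simp [hyb, hyc]
  rw [hset]
  have hcmem : c ∉ (Finset.univ.filter fun x => G.Adj x a = true).erase b := by
    simp [hc]
  have hbmem : b ∈ (Finset.univ.filter fun x => G.Adj x a = true) := by simp [hb]
  rw [Finset.card_insert_of_notMem hcmem, Finset.card_erase_of_mem hbmem]
  have : 0 < (Finset.univ.filter fun x => G.Adj x a = true).card :=
    Finset.card_pos.mpr ⟨b, hbmem⟩
  omega

end S4P
namespace S4P
variable {V : Type} [Fintype V] [DecidableEq V]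
set_option linter.unusedSectionVars false

lemma twoSwitch_outDeg {G G' : SDigraph V} (h : TwoSwitch G G') (x : V) :
    G'.outDeg x = G.outDeg x := by
  obtain ⟨v1, v2, v3, v4, h12, h13, h14, h23, h24, h34, a12, a34, a14, a32, hform⟩ := h
  by_cases hx1 : x = v1
  · subst hx1
    refine outDeg_aux G G' x v2 v4 a12 a14 h24 fun y => ?_
    rw [hform x y]
    have e1 : ((x = x ∧ y = v2) ∨ (x = v3 ∧ y = v4)) ↔ y = v2 := by
      constructor
      · rintro (⟨_, h⟩ | ⟨h, _⟩); exact h; exact absurd h h13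
      · exact fun h => Or.inl ⟨rfl, h⟩
    have e2 : ((x = x ∧ y = v4) ∨ (x = v3 ∧ y = v2)) ↔ y = v4 := by
      constructor
      · rintro (⟨_, h⟩ | ⟨h, _⟩); exact h; exact absurd h h13
      · exact fun h => Or.inl ⟨rfl, h⟩
    exact if_congr e1 rfl (if_congr e2 rfl rfl)
  · by_cases hx3 : x = v3
    · subst hx3
      refine outDeg_aux G G' x v4 v2 a34 a32 (fun h => h24 h.symm) fun y => ?_
      rw [hform x y]
      have e1 : ((x = v1 ∧ y = v2) ∨ (x = x ∧ y = v4)) ↔ y = v4 := by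
        constructor
        · rintro (⟨h, _⟩ | ⟨_, h⟩); exact absurd h.symm h13; exact h
        · exact fun h => Or.inr ⟨rfl, h⟩
      have e2 : ((x = v1 ∧ y = v4) ∨ (x = x ∧ y = v2)) ↔ y = v2 := by
        constructor
        · rintro (⟨h, _⟩ | ⟨_, h⟩); exact absurd h.symm h13; exact h
        · exact fun h => Or.inr ⟨rfl, h⟩
      exact if_congr e1 rfl (if_congr e2 rfl rfl)
    · unfold SDigraph.outDeg
      congr 1
      apply Finset.filter_congr
      intro y _
      rw [hform x y]
      simp [hx1, hx3]

lemma twoSwitch_inDeg {G G' : SDigraph V} (h : TwoSwitch G G') (y : V) :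
    G'.inDeg y = G.inDeg y := by
  obtain ⟨v1, v2, v3, v4, h12, h13, h14, h23, h24, h34, a12, a34, a14, a32, hform⟩ := h
  by_cases hy2 : y = v2
  · subst hy2
    refine inDeg_aux G G' y v1 v3 a12 a32 h13 fun x => ?_
    rw [hform x y]
    have e1 : ((x = v1 ∧ y = y) ∨ (x = v3 ∧ y = v4)) ↔ x = v1 := by
      constructor
      · rintro (⟨h, _⟩ | ⟨_, h⟩); exact h; exact absurd h h24
      · exact fun h => Or.inl ⟨h, rfl⟩
    have e2 : ((x = v1 ∧ y = v4) ∨ (x = v3 ∧ y = y)) ↔ x = v3 := by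
      constructor
      · rintro (⟨_, h⟩ | ⟨h, _⟩); exact absurd h h24; exact h
      · exact fun h => Or.inr ⟨h, rfl⟩
    exact if_congr e1 rfl (if_congr e2 rfl rfl)
  · by_cases hy4 : y = v4
    · subst hy4
      refine inDeg_aux G G' y v3 v1 a34 a14 (fun h => h13 h.symm) fun x => ?_
      rw [hform x y]
      have e1 : ((x = v1 ∧ y = v2) ∨ (x = v3 ∧ y = y)) ↔ x = v3 := by
        constructor
        · rintro (⟨_, h⟩ | ⟨h, _⟩); exact absurd h.symm h24; exact h
        · exact fun h => Or.inr ⟨h, rfl⟩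
      have e2 : ((x = v1 ∧ y = y) ∨ (x = v3 ∧ y = v2)) ↔ x = v1 := by
        constructor
        · rintro (⟨h, _⟩ | ⟨_, h⟩); exact h; exact absurd h.symm h24
        · exact fun h => Or.inl ⟨h, rfl⟩
      exact if_congr e1 rfl (if_congr e2 rfl rfl)
    · unfold SDigraph.inDeg
      congr 1
      apply Finset.filter_congr
      intro x _
      rw [hform x y]
      simp [hy2, hy4]

lemma twoSwitch_realizes {d : V → ℕ × ℕ} {G G' : SDigraph V} (h : TwoSwitch G G')
    (hG : Realizes G d) : Realizes G' d := fun v =>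
  ⟨by rw [twoSwitch_outDeg h]; exact (hG v).1, by rw [twoSwitch_inDeg h]; exact (hG v).2⟩

end S4P
namespace S4P
variable {V : Type} [Fintype V] [DecidableEq V]
set_option linter.unusedSectionVars false

lemma flip3_adj (G : SDigraph V) (u v w x y : V) : (flip3 G u v w).Adj x y =
    if (x = u ∨ x = v ∨ x = w) ∧ (y = u ∨ y = v ∨ y = w) then G.Adj y x
    else G.Adj x y := rfl

lemma flip3_rot (G : SDigraph V) (u v w : V) : flip3 G u v w = flip3 G v w u := by
  apply sd_ext; funext x y
  rw [flip3_adj, flip3_adj]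
  exact if_congr (by tauto) rfl rfl

section flip
variable {G : SDigraph V} {u v w : V}

lemma flip3_out_form (huv : u ≠ v) (hvw : v ≠ w) (huw : u ≠ w)
    (awu : G.Adj w u = true) (avu : G.Adj v u = false) :
    ∀ y, (flip3 G u v w).Adj u y = if y = v then false else if y = w then true
      else G.Adj u y := by
  intro y
  rw [flip3_adj]
  by_cases h1 : y = v
  · rw [h1, if_pos ⟨Or.inl rfl, Or.inr (Or.inl rfl)⟩, if_pos rfl]
    exact avu
  · by_cases h2 : y = w
    · rw [h2, if_pos ⟨Or.inl rfl, Or.inr (Or.inr rfl)⟩,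
        if_neg (show ¬ w = v from fun h => hvw h.symm), if_pos rfl]
      exact awu
    · rw [if_neg h1, if_neg h2]
      by_cases h3 : y = u
      · rw [h3, if_pos ⟨Or.inl rfl, Or.inl rfl⟩]
      · rw [if_neg (fun hc => (by rcases hc.2 with h | h | h <;> [exact h3 h; exact h1 h; exact h2 h] : False))]

lemma flip3_in_form (huv : u ≠ v) (hvw : v ≠ w) (huw : u ≠ w)
    (auv : G.Adj u v = true) (auw : G.Adj u w = false) :
    ∀ x, (flip3 G u v w).Adj x u = if x = w then false else if x = v then true
      else G.Adj x u := by
  intro x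
  rw [flip3_adj]
  by_cases h1 : x = w
  · rw [h1, if_pos ⟨Or.inr (Or.inr rfl), Or.inl rfl⟩, if_pos rfl]
    exact auw
  · by_cases h2 : x = v
    · rw [h2, if_pos ⟨Or.inr (Or.inl rfl), Or.inl rfl⟩,
        if_neg (show ¬ v = w from hvw), if_pos rfl]
      exact auv
    · rw [if_neg h1, if_neg h2]
      by_cases h3 : x = u
      · rw [h3, if_pos ⟨Or.inl rfl, Or.inl rfl⟩]
      · rw [if_neg (fun hc => (by rcases hc.1 with h | h | h <;> [exact h3 h; exact h2 h; exact h1 h] : False))]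

lemma flip3_outDeg_first (huv : u ≠ v) (hvw : v ≠ w) (huw : u ≠ w)
    (auv : G.Adj u v = true) (awu : G.Adj w u = true)
    (avu : G.Adj v u = false) (auw : G.Adj u w = false) :
    (flip3 G u v w).outDeg u = G.outDeg u :=
  outDeg_aux G _ u v w auv auw hvw (flip3_out_form huv hvw huw awu avu)

lemma flip3_inDeg_first (huv : u ≠ v) (hvw : v ≠ w) (huw : u ≠ w)
    (auv : G.Adj u v = true) (awu : G.Adj w u = true)
    (avu : G.Adj v u = false) (auw : G.Adj u w = false) :
    (flip3 G u v w).inDeg u = G.inDeg u :=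
  inDeg_aux G _ u w v awu avu (fun h => hvw h.symm) (flip3_in_form huv hvw huw auv auw)

lemma flip3_deg_out (hx : ¬ (x = u ∨ x = v ∨ x = w)) :
    (flip3 G u v w).outDeg x = G.outDeg x := by
  unfold SDigraph.outDeg
  congr 1
  apply Finset.filter_congr
  intro y _
  rw [flip3_adj, if_neg (fun hc => hx hc.1)]

lemma flip3_deg_in (hx : ¬ (x = u ∨ x = v ∨ x = w)) :
    (flip3 G u v w).inDeg x = G.inDeg x := by
  unfold SDigraph.inDeg
  congr 1
  apply Finset.filter_congr
  intro y _
  rw [flip3_adj, if_neg (fun hc => hx hc.2)]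

lemma flip3_realizes {d : V → ℕ × ℕ} (huv : u ≠ v) (hvw : v ≠ w) (huw : u ≠ w)
    (auv : G.Adj u v = true) (avw : G.Adj v w = true) (awu : G.Adj w u = true)
    (avu : G.Adj v u = false) (awv : G.Adj w v = false) (auw : G.Adj u w = false)
    (hG : Realizes G d) : Realizes (flip3 G u v w) d := by
  have hrot1 : flip3 G u v w = flip3 G v w u := flip3_rot G u v w
  have hrot2 : flip3 G u v w = flip3 G w u v := by
    rw [flip3_rot G u v w, flip3_rot G v w u]
  intro x
  constructor
  · by_cases h1 : x = u
    · rw [h1, flip3_outDeg_first huv hvw huw auv awu avu auw]; exact (hG u).1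
    · by_cases h2 : x = v
      · rw [h2, hrot1,
          flip3_outDeg_first hvw (Ne.symm huw) (Ne.symm huv) avw auv awv avu]
        exact (hG v).1
      · by_cases h3 : x = w
        · rw [h3, hrot2,
            flip3_outDeg_first (Ne.symm huw) huv (Ne.symm hvw) awu avw auw awv]
          exact (hG w).1
        · rw [flip3_deg_out (by tauto)]; exact (hG x).1
  · by_cases h1 : x = u
    · rw [h1, flip3_inDeg_first huv hvw huw auv awu avu auw]; exact (hG u).2
    · by_cases h2 : x = v
      · rw [h2, hrot1,
          flip3_inDeg_first hvw (Ne.symm huw) (Ne.symm huv) avw auv awv avu]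
        exact (hG v).2
      · by_cases h3 : x = w
        · rw [h3, hrot2,
            flip3_inDeg_first (Ne.symm huw) huv (Ne.symm hvw) awu avw auw awv]
          exact (hG w).2
        · rw [flip3_deg_in (by tauto)]; exact (hG x).2

end flip
end S4P
namespace S4P
variable {V : Type} [Fintype V] [DecidableEq V]
set_option linter.unusedSectionVars false
set_option linter.unusedVariables false

lemma dist_swapD_lt (G H : SDigraph V) (v1 v2 v3 v4 : V)
    (h12 : v1 ≠ v2) (h13 : v1 ≠ v3) (h14 : v1 ≠ v4) (h23 : v2 ≠ v3) (h24 : v2 ≠ v4)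
    (h34 : v3 ≠ v4)
    (hlt : ms false (H.Adj v1 v2) + ms false (H.Adj v3 v4)
        + ms true (H.Adj v1 v4) + ms true (H.Adj v3 v2)
      < ms true (H.Adj v1 v2) + ms true (H.Adj v3 v4)
        + ms false (H.Adj v1 v4) + ms false (H.Adj v3 v2))
    (a12 : G.Adj v1 v2 = true) (a34 : G.Adj v3 v4 = true)
    (a14 : G.Adj v1 v4 = false) (a32 : G.Adj v3 v2 = false) (h32 h34') :
    dist (swapD G v1 v2 v3 v4 h12 h14 h32 h34') H < dist G H := by
  set G' := swapD G v1 v2 v3 v4 h12 h14 h32 h34' with hG'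
  have e1 : G'.Adj v1 v2 = false := by
    rw [hG', swapD_adj, if_pos (Or.inl ⟨rfl, rfl⟩)]
  have e2 : G'.Adj v3 v4 = false := by
    rw [hG', swapD_adj, if_pos (Or.inr ⟨rfl, rfl⟩)]
  have e3 : G'.Adj v1 v4 = true := by
    rw [hG', swapD_adj,
      if_neg (by rintro (⟨-, h⟩ | ⟨h, -⟩); exact h24 h.symm; exact h13 h),
      if_pos (Or.inl ⟨rfl, rfl⟩)]
  have e4 : G'.Adj v3 v2 = true := by
    rw [hG', swapD_adj,
      if_neg (by rintro (⟨h, -⟩ | ⟨-, h⟩); exact h13 h.symm; exact h24 h),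
      if_pos (Or.inr ⟨rfl, rfl⟩)]
  have hm0 : ((v1, v2) : V × V) ∉ ({((v3, v4) : V × V), (v1, v4), (v3, v2)} : Finset (V × V)) := by
    simp [Prod.ext_iff, h13, h24, Ne.symm h24, Ne.symm h13]
  have hm1 : ((v3, v4) : V × V) ∉ ({((v1, v4) : V × V), (v3, v2)} : Finset (V × V)) := by
    simp [Prod.ext_iff, Ne.symm h13, Ne.symm h24]
  have hm2 : ((v1, v4) : V × V) ∉ ({((v3, v2) : V × V)} : Finset (V × V)) := by
    simp [Prod.ext_iff, h13]
  apply dist_lt_of_sum_lt G G' H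
    (S := insert ((v1, v2) : V × V) (insert (v3, v4) (insert (v1, v4) {(v3, v2)})))
  · rintro ⟨x, y⟩ hp
    have n1 : ¬ ((x = v1 ∧ y = v2) ∨ (x = v3 ∧ y = v4)) := by
      rintro (⟨hx, hy⟩ | ⟨hx, hy⟩) <;> subst hx <;> subst hy <;> apply hp <;> simp
    have n2 : ¬ ((x = v1 ∧ y = v4) ∨ (x = v3 ∧ y = v2)) := by
      rintro (⟨hx, hy⟩ | ⟨hx, hy⟩) <;> subst hx <;> subst hy <;> apply hp <;> simp
    show G'.Adj x y = G.Adj x y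
    rw [hG', swapD_adj, if_neg n1, if_neg n2]
  · rw [Finset.sum_insert hm0, Finset.sum_insert hm1, Finset.sum_insert hm2,
      Finset.sum_singleton, Finset.sum_insert hm0, Finset.sum_insert hm1,
      Finset.sum_insert hm2, Finset.sum_singleton]
    simp only [e1, e2, e3, e4, a12, a34, a14, a32]
    omega

lemma dist_flip3_lt (G H : SDigraph V) (u v w : V)
    (huv : u ≠ v) (hvw : v ≠ w) (huw : u ≠ w)
    (auv : G.Adj u v = true) (avw : G.Adj v w = true) (awu : G.Adj w u = true)
    (avu : G.Adj v u = false) (awv : G.Adj w v = false) (auw : G.Adj u w = false)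
    (buv : H.Adj u v = false) (bvw : H.Adj v w = false) (bwu : H.Adj w u = false)
    (bvu : H.Adj v u = true) (bwv : H.Adj w v = true) (buw : H.Adj u w = true) :
    dist (flip3 G u v w) H < dist G H := by
  have nuv := Ne.symm huv
  have nvw := Ne.symm hvw
  have nuw := Ne.symm huw
  have c1 : (flip3 G u v w).Adj u v = false := by
    rw [flip3_adj, if_pos ⟨Or.inl rfl, Or.inr (Or.inl rfl)⟩]; exact avu
  have c2 : (flip3 G u v w).Adj v w = false := by
    rw [flip3_adj, if_pos ⟨Or.inr (Or.inl rfl), Or.inr (Or.inr rfl)⟩]; exact awv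
  have c3 : (flip3 G u v w).Adj w u = false := by
    rw [flip3_adj, if_pos ⟨Or.inr (Or.inr rfl), Or.inl rfl⟩]; exact auw
  have c4 : (flip3 G u v w).Adj v u = true := by
    rw [flip3_adj, if_pos ⟨Or.inr (Or.inl rfl), Or.inl rfl⟩]; exact auv
  have c5 : (flip3 G u v w).Adj w v = true := by
    rw [flip3_adj, if_pos ⟨Or.inr (Or.inr rfl), Or.inr (Or.inl rfl)⟩]; exact avw
  have c6 : (flip3 G u v w).Adj u w = true := by
    rw [flip3_adj, if_pos ⟨Or.inl rfl, Or.inr (Or.inr rfl)⟩]; exact awu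
  have hm0 : ((u, v) : V × V) ∉
      ({((v, w) : V × V), (w, u), (v, u), (w, v), (u, w)} : Finset (V × V)) := by
    simp [Prod.ext_iff, huv, hvw, huw, nuv, nvw, nuw]
  have hm1 : ((v, w) : V × V) ∉
      ({((w, u) : V × V), (v, u), (w, v), (u, w)} : Finset (V × V)) := by
    simp [Prod.ext_iff, huv, hvw, huw, nuv, nvw, nuw]
  have hm2 : ((w, u) : V × V) ∉ ({((v, u) : V × V), (w, v), (u, w)} : Finset (V × V)) := by
    simp [Prod.ext_iff, huv, hvw, huw, nuv, nvw, nuw]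
  have hm3 : ((v, u) : V × V) ∉ ({((w, v) : V × V), (u, w)} : Finset (V × V)) := by
    simp [Prod.ext_iff, huv, hvw, huw, nuv, nvw, nuw]
  have hm4 : ((w, v) : V × V) ∉ ({((u, w) : V × V)} : Finset (V × V)) := by
    simp [Prod.ext_iff, huv, hvw, huw, nuv, nvw, nuw]
  apply dist_lt_of_sum_lt G (flip3 G u v w) H
    (S := insert ((u, v) : V × V)
      (insert (v, w) (insert (w, u) (insert (v, u) (insert (w, v) {(u, w)})))))
  · rintro ⟨x, y⟩ hp
    show (flip3 G u v w).Adj x y = G.Adj x y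
    rw [flip3_adj]
    by_cases hc : (x = u ∨ x = v ∨ x = w) ∧ (y = u ∨ y = v ∨ y = w)
    · rw [if_pos hc]
      have hxy : x = y := by
        by_contra hxy
        apply hp
        simp only [Finset.mem_insert, Finset.mem_singleton, Prod.mk.injEq]
        rcases hc.1 with h1 | h1 | h1 <;> rcases hc.2 with h2 | h2 | h2 <;>
          first
            | exact absurd (h1.trans h2.symm) hxy
            | exact Or.inl ⟨h1, h2⟩
            | exact Or.inr (Or.inl ⟨h1, h2⟩)
            | exact Or.inr (Or.inr (Or.inl ⟨h1, h2⟩))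
            | exact Or.inr (Or.inr (Or.inr (Or.inl ⟨h1, h2⟩)))
            | exact Or.inr (Or.inr (Or.inr (Or.inr (Or.inl ⟨h1, h2⟩))))
            | exact Or.inr (Or.inr (Or.inr (Or.inr (Or.inr ⟨h1, h2⟩))))
      rw [hxy]
    · rw [if_neg hc]
  · rw [Finset.sum_insert hm0, Finset.sum_insert hm1, Finset.sum_insert hm2,
      Finset.sum_insert hm3, Finset.sum_insert hm4, Finset.sum_singleton,
      Finset.sum_insert hm0, Finset.sum_insert hm1, Finset.sum_insert hm2,
      Finset.sum_insert hm3, Finset.sum_insert hm4, Finset.sum_singleton]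
    simp only [c1, c2, c3, c4, c5, c6, auv, avw, awu, avu, awv, auw,
      buv, bvw, bwu, bvu, bwv, buw]
    simp [ms]

end S4P
namespace S4P
variable {V : Type} [Fintype V] [DecidableEq V]
set_option linter.unusedSectionVars false
set_option linter.unusedVariables false

def Red (G H : SDigraph V) (a b : V) : Prop := G.Adj a b = true ∧ H.Adj a b = false
def Blue (G H : SDigraph V) (a b : V) : Prop := H.Adj a b = true ∧ G.Adj a b = false

lemma card_sdiff_eq {A B : Finset V} (h : A.card = B.card) :
    (A \ B).card = (B \ A).card := by
  have h1 := Finset.card_inter_add_card_sdiff A B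
  have h2 := Finset.card_inter_add_card_sdiff B A
  rw [Finset.inter_comm] at h2
  omega

lemma exists_swap_mem {A B : Finset V} (h : A.card = B.card) {a : V}
    (ha : a ∈ A) (hb : a ∉ B) : ∃ c, c ∈ B ∧ c ∉ A := by
  have h1 : a ∈ A \ B := Finset.mem_sdiff.mpr ⟨ha, hb⟩
  have h2 : 0 < (B \ A).card := by
    rw [← card_sdiff_eq h]
    exact Finset.card_pos.mpr ⟨a, h1⟩
  obtain ⟨c, hc⟩ := Finset.card_pos.mp h2
  exact ⟨c, (Finset.mem_sdiff.mp hc).1, (Finset.mem_sdiff.mp hc).2⟩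

lemma exists_blue_in {G H : SDigraph V} (hdeg : ∀ x, G.inDeg x = H.inDeg x)
    {a b : V} (h : Red G H a b) : ∃ c, Blue G H c b := by
  obtain ⟨c, hc1, hc2⟩ := exists_swap_mem (A := Finset.univ.filter fun x => G.Adj x b = true)
    (B := Finset.univ.filter fun x => H.Adj x b = true) (a := a) (hdeg b)
    (by simp [h.1]) (by simp [h.2])
  refine ⟨c, ?_, ?_⟩
  · simpa using hc1
  · simp only [Finset.mem_filter, Finset.mem_univ, true_and] at hc2
    exact Bool.not_eq_true _ ▸ (by simpa using hc2)

lemma exists_red_in {G H : SDigraph V} (hdeg : ∀ x, G.inDeg x = H.inDeg x)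
    {a b : V} (h : Blue G H a b) : ∃ c, Red G H c b := by
  obtain ⟨c, hc1, hc2⟩ := exists_swap_mem (A := Finset.univ.filter fun x => H.Adj x b = true)
    (B := Finset.univ.filter fun x => G.Adj x b = true) (a := a) (hdeg b).symm
    (by simp [h.1]) (by simp [h.2])
  refine ⟨c, ?_, ?_⟩
  · simpa using hc1
  · simp only [Finset.mem_filter, Finset.mem_univ, true_and] at hc2
    simpa using hc2

lemma exists_red_out {G H : SDigraph V} (hdeg : ∀ x, G.outDeg x = H.outDeg x)
    {a b : V} (h : Blue G H a b) : ∃ c, Red G H a c := by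
  obtain ⟨c, hc1, hc2⟩ := exists_swap_mem (A := Finset.univ.filter fun y => H.Adj a y = true)
    (B := Finset.univ.filter fun y => G.Adj a y = true) (a := b) (hdeg a).symm
    (by simp [h.1]) (by simp [h.2])
  refine ⟨c, ?_, ?_⟩
  · simpa using hc1
  · simp only [Finset.mem_filter, Finset.mem_univ, true_and] at hc2
    simpa using hc2

/-- an alternating closed walk of period `k` : red arcs `(T n, Hd n)`,
blue arcs `(T (n+1), Hd n)`. -/
def IsWalk (G H : SDigraph V) (k : ℕ) (T Hd : ℕ → V) : Prop :=
  (∀ n, T (n + k) = T n) ∧ (∀ n, Hd (n + k) = Hd n) ∧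
  (∀ n, Red G H (T n) (Hd n)) ∧ (∀ n, Blue G H (T (n + 1)) (Hd n))

lemma restrict {G H : SDigraph V} {T Hd : ℕ → V}
    (hred : ∀ n, Red G H (T n) (Hd n)) (hblue : ∀ n, Blue G H (T (n + 1)) (Hd n))
    (s p : ℕ) (hp : 0 < p) (hwrap : Blue G H (T s) (Hd (s + (p - 1)))) :
    IsWalk G H p (fun n => T (s + n % p)) (fun n => Hd (s + n % p)) := by
  refine ⟨fun n => ?_, fun n => ?_, fun n => hred _, fun n => ?_⟩
  · show T (s + (n + p) % p) = T (s + n % p)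
    rw [Nat.add_mod_right]
  · show Hd (s + (n + p) % p) = Hd (s + n % p)
    rw [Nat.add_mod_right]
  · show Blue G H (T (s + (n + 1) % p)) (Hd (s + n % p))
    have hm : n % p < p := Nat.mod_lt _ hp
    have hmm : (n % p + 1) % p = (n + 1) % p := Nat.mod_add_mod n p 1
    by_cases hl : n % p = p - 1
    · have h1 : (n + 1) % p = 0 := by
        rw [← hmm, hl, show p - 1 + 1 = p by omega, Nat.mod_self]
      rw [h1, hl, Nat.add_zero]
      exact hwrap
    · have h1 : (n + 1) % p = n % p + 1 := by
        rw [← hmm, Nat.mod_eq_of_lt (by omega)]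
      rw [h1, show s + (n % p + 1) = s + n % p + 1 by omega]
      exact hblue _

lemma shift_walk {G H : SDigraph V} {T Hd : ℕ → V} {k : ℕ} (hp : 0 < k)
    (hW : IsWalk G H k T Hd) (s : ℕ) :
    IsWalk G H k (fun n => T (s + n % k)) (fun n => Hd (s + n % k)) := by
  obtain ⟨hT, hH, hred, hblue⟩ := hW
  refine restrict hred hblue s k hp ?_
  have := hblue (s + (k - 1))
  have hTk : T (s + (k - 1) + 1) = T s := by
    have : s + (k - 1) + 1 = s + k := by omega
    rw [this, hT s]
  rwa [hTk] at this

end S4P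
namespace S4P
variable {V : Type} [Fintype V] [DecidableEq V]
set_option linter.unusedSectionVars false
set_option linter.unusedVariables false

lemma exists_red {G H : SDigraph V} (hin : ∀ x, G.inDeg x = H.inDeg x)
    (hne : G ≠ H) : ∃ a b, Red G H a b := by
  have hmis : ∃ a b, G.Adj a b ≠ H.Adj a b := by
    by_contra hno
    push_neg at hno
    exact hne (sd_ext (funext fun a => funext fun b => hno a b))
  obtain ⟨a, b, hab⟩ := hmis
  cases hG : G.Adj a b
  · cases hH : H.Adj a b
    · exact absurd (hG.trans hH.symm) hab
    · obtain ⟨c, hc⟩ := exists_red_in hin ⟨hH, hG⟩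
      exact ⟨c, b, hc⟩
  · cases hH : H.Adj a b
    · exact ⟨a, b, hG, hH⟩
    · exact absurd (hG.trans hH.symm) hab

noncomputable def rstep (G H : SDigraph V) (hout : ∀ x, G.outDeg x = H.outDeg x)
    (hin : ∀ x, G.inDeg x = H.inDeg x) :
    {p : V × V // Red G H p.1 p.2} → {p : V × V // Red G H p.1 p.2} := fun q =>
  ⟨⟨(exists_blue_in hin q.2).choose,
    (exists_red_out hout (exists_blue_in hin q.2).choose_spec).choose⟩,
    (exists_red_out hout (exists_blue_in hin q.2).choose_spec).choose_spec⟩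

lemma rstep_blue (G H : SDigraph V) (hout) (hin) (q : {p : V × V // Red G H p.1 p.2}) :
    Blue G H ((rstep G H hout hin q).1.1) q.1.2 :=
  (exists_blue_in hin q.2).choose_spec

lemma exists_walk {G H : SDigraph V} (hout : ∀ x, G.outDeg x = H.outDeg x)
    (hin : ∀ x, G.inDeg x = H.inDeg x) (hne : G ≠ H) :
    ∃ k T Hd, 0 < k ∧ IsWalk G H k T Hd := by
  classical
  obtain ⟨a0, b0, hr0⟩ := exists_red hin hne
  set q0 : {p : V × V // Red G H p.1 p.2} := ⟨(a0, b0), hr0⟩ with hq0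
  set seq : ℕ → {p : V × V // Red G H p.1 p.2} :=
    fun n => (rstep G H hout hin)^[n] q0 with hseq
  set t : ℕ → V := fun n => (seq n).1.1 with ht
  set hd : ℕ → V := fun n => (seq n).1.2 with hhd
  have hredn : ∀ n, Red G H (t n) (hd n) := fun n => (seq n).2
  have hbluen : ∀ n, Blue G H (t (n + 1)) (hd n) := by
    intro n
    have hstep : seq (n + 1) = rstep G H hout hin (seq n) := by
      rw [hseq]
      exact Function.iterate_succ_apply' _ _ _
    have := rstep_blue G H hout hin (seq n)
    show Blue G H ((seq (n+1)).1.1) ((seq n).1.2)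
    rw [hstep]
    exact this
  have hpig : ∃ i j, i < j ∧ t i = t j := by
    obtain ⟨i, j, hij, hq⟩ := Finite.exists_ne_map_eq_of_infinite t
    rcases Nat.lt_or_ge i j with h | h
    · exact ⟨i, j, h, hq⟩
    · exact ⟨j, i, by omega, hq.symm⟩
  obtain ⟨i, j, hij, htij⟩ := hpig
  refine ⟨j - i, _, _, by omega, restrict hredn hbluen i (j - i) (by omega) ?_⟩
  have h1 := hbluen (j - 1)
  rw [show j - 1 + 1 = j by omega, ← htij] at h1
  rw [show i + (j - i - 1) = j - 1 by omega]
  exact h1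

end S4P
namespace S4P
variable {V : Type} [Fintype V] [DecidableEq V]
set_option linter.unusedSectionVars false
set_option linter.unusedVariables false

lemma mod_succ_zero {n p : ℕ} (hp : 0 < p) (hm : n % p = p - 1) : (n + 1) % p = 0 := by
  rw [← Nat.mod_add_mod n p 1, hm, show p - 1 + 1 = p by omega, Nat.mod_self]

lemma mod_succ_succ {n p : ℕ} (hp : 0 < p) (hm : n % p ≠ p - 1) :
    (n + 1) % p = n % p + 1 := by
  have h1 : n % p < p := Nat.mod_lt _ hp
  rw [← Nat.mod_add_mod n p 1, Nat.mod_eq_of_lt (by omega)]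

lemma walk_sub_tails {G H : SDigraph V} {k : ℕ} {T Hd : ℕ → V}
    (hW : IsWalk G H k T Hd) {i j : ℕ} (hij : i < j) (heq : T i = T j) :
    ∃ T' Hd', IsWalk G H (j - i) T' Hd' := by
  obtain ⟨hT, hH, hred, hblue⟩ := hW
  refine ⟨_, _, restrict hred hblue i (j - i) (by omega) ?_⟩
  have h1 := hblue (j - 1)
  rw [show j - 1 + 1 = j by omega, ← heq] at h1
  rw [show i + (j - i - 1) = j - 1 by omega]
  exact h1

lemma walk_sub_heads {G H : SDigraph V} {k : ℕ} {T Hd : ℕ → V}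
    (hW : IsWalk G H k T Hd) {i j : ℕ} (hij : i < j) (heq : Hd i = Hd j) :
    ∃ T' Hd', IsWalk G H (j - i) T' Hd' := by
  obtain ⟨hT, hH, hred, hblue⟩ := hW
  refine ⟨_, _, restrict hred hblue (i + 1) (j - i) (by omega) ?_⟩
  have h1 := hblue i
  rw [heq] at h1
  rw [show i + 1 + (j - i - 1) = j by omega]
  exact h1

lemma walk_shorten_chord {G H : SDigraph V} {k : ℕ} {T Hd : ℕ → V}
    (hW : IsWalk G H k T Hd) (hk : 3 ≤ k) (hch : Red G H (T 0) (Hd 1)) :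
    ∃ T' Hd', IsWalk G H (k - 1) T' Hd' := by
  obtain ⟨hT, hH, hred, hblue⟩ := hW
  set p := k - 1 with hp
  have hp2 : 2 ≤ p := by omega
  have hppos : 0 < p := by omega
  refine ⟨fun n => if n % p = 0 then T 0 else T (n % p + 1),
    fun n => if n % p = 0 then Hd 1 else Hd (n % p + 1),
    fun n => by simp only [Nat.add_mod_right], fun n => by simp only [Nat.add_mod_right],
    fun n => ?_, fun n => ?_⟩
  · by_cases hm : n % p = 0
    · simp only [hm, if_pos rfl]
      exact hch
    · simp only [if_neg hm]
      exact hred _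
  · have hmlt : n % p < p := Nat.mod_lt _ hppos
    by_cases hm : n % p = p - 1
    · have h1 : (n + 1) % p = 0 := mod_succ_zero hppos hm
      have hm0 : n % p ≠ 0 := by omega
      simp only [h1, if_pos rfl, if_neg hm0, if_true]
      rw [hm, show p - 1 + 1 = k - 1 by omega]
      have h2 := hblue (k - 1)
      have hTk : T k = T 0 := by
        conv_lhs => rw [show (k : ℕ) = 0 + k by omega]
        rw [hT]
      rw [show k - 1 + 1 = k by omega, hTk] at h2
      exact h2
    · have h1 : (n + 1) % p = n % p + 1 := mod_succ_succ hppos hm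
      by_cases hm0 : n % p = 0
      · simp only [h1, hm0, if_pos rfl, if_neg (by omega : ¬(0 + 1 = 0))]
        exact hblue 1
      · simp only [h1, if_neg hm0, if_neg (by omega : ¬(n % p + 1 = 0))]
        exact hblue _

lemma walk_shorten_deg {G H : SDigraph V} {k : ℕ} {T Hd : ℕ → V}
    (hW : IsWalk G H k T Hd) (hk : 4 ≤ k) (hdg : ∀ n, T n = Hd (n + 1))
    (hch : Blue G H (T 3) (T 0)) :
    ∃ T' Hd', IsWalk G H (k - 1) T' Hd' := by
  obtain ⟨hT, hH, hred, hblue⟩ := hW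
  set p := k - 1 with hp
  have hp2 : 3 ≤ p := by omega
  have hppos : 0 < p := by omega
  refine ⟨fun n => if n % p = 0 then T 1 else T (n % p + 2),
    fun n => if n % p = 0 then T 0 else Hd (n % p + 2),
    fun n => by simp only [Nat.add_mod_right], fun n => by simp only [Nat.add_mod_right],
    fun n => ?_, fun n => ?_⟩
  · by_cases hm : n % p = 0
    · simp only [hm, if_pos rfl]
      have := hred 1
      rwa [← hdg 0] at this
    · simp only [if_neg hm]
      exact hred _
  · have hmlt : n % p < p := Nat.mod_lt _ hppos
    by_cases hm : n % p = p - 1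
    · have h1 : (n + 1) % p = 0 := mod_succ_zero hppos hm
      have hm0 : n % p ≠ 0 := by omega
      simp only [h1, if_pos rfl, if_neg hm0, if_true]
      rw [hm, show p - 1 + 2 = k by omega]
      have hHk : Hd k = Hd 0 := by
        conv_lhs => rw [show (k : ℕ) = 0 + k by omega]
        rw [hH]
      rw [hHk]
      exact hblue 0
    · have h1 : (n + 1) % p = n % p + 1 := mod_succ_succ hppos hm
      by_cases hm0 : n % p = 0
      · simp only [h1, hm0, if_pos rfl, if_neg (by omega : ¬(0 + 1 = 0))]
        simpa using hch
      · simp only [h1, if_neg hm0, if_neg (by omega : ¬(n % p + 1 = 0))]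
        rw [show n % p + 1 + 2 = n % p + 2 + 1 by omega]
        exact hblue _

end S4P
namespace S4P
variable {V : Type} [Fintype V] [DecidableEq V]
set_option linter.unusedSectionVars false
set_option linter.unusedVariables false

lemma exists_reduction (G H : SDigraph V)
    (hout : ∀ x, G.outDeg x = H.outDeg x) (hin : ∀ x, G.inDeg x = H.inDeg x)
    (hne : G ≠ H) :
    (∃ G', TwoSwitch G G' ∧ dist G' H < dist G H) ∨
    (∃ H', TwoSwitch H H' ∧ dist G H' < dist G H) ∨
    (∃ u v w, u ≠ v ∧ v ≠ w ∧ u ≠ w ∧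
      G.Adj u v = true ∧ G.Adj v w = true ∧ G.Adj w u = true ∧
      G.Adj v u = false ∧ G.Adj w v = false ∧ G.Adj u w = false ∧
      dist (flip3 G u v w) H < dist G H) := by
  classical
  have hex : ∃ k, 0 < k ∧ ∃ T Hd, IsWalk G H k T Hd := by
    obtain ⟨k, T, Hd, hk, hW⟩ := exists_walk hout hin hne
    exact ⟨k, hk, T, Hd, hW⟩
  set k0 := Nat.find hex with hk0
  obtain ⟨hk0pos, T, Hd, hW⟩ := Nat.find_spec hex
  have hmin : ∀ m, m < k0 → ¬ (0 < m ∧ ∃ T Hd, IsWalk G H m T Hd) :=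
    fun m hm => Nat.find_min hex hm
  -- tails of any minimal walk are injective below k0, same for heads
  have tne : ∀ (T' Hd' : ℕ → V), IsWalk G H k0 T' Hd' →
      ∀ i j, i < j → j < k0 → T' i ≠ T' j := by
    intro T' Hd' hW' i j hij hjk heq
    obtain ⟨T'', Hd'', hW''⟩ := walk_sub_tails hW' hij heq
    exact hmin (j - i) (by omega) ⟨by omega, T'', Hd'', hW''⟩
  have hhne : ∀ (T' Hd' : ℕ → V), IsWalk G H k0 T' Hd' →
      ∀ i j, i < j → j < k0 → Hd' i ≠ Hd' j := by
    intro T' Hd' hW' i j hij hjk heq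
    obtain ⟨T'', Hd'', hW''⟩ := walk_sub_heads hW' hij heq
    exact hmin (j - i) (by omega) ⟨by omega, T'', Hd'', hW''⟩
  have hk2 : 2 ≤ k0 := by
    rcases Nat.lt_or_ge k0 2 with h | h
    · exfalso
      have hk1 : k0 = 1 := by omega
      have hred := hW.2.2.1 0
      have hblue := hW.2.2.2 0
      have hT1 : T (0 + k0) = T 0 := hW.1 0
      rw [hk1] at hT1
      rw [show (0 : ℕ) + 1 = 1 by rfl] at hblue
      rw [show (1 : ℕ) = 0 + 1 by rfl, hT1] at hblue
      have hc := hblue.2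
      rw [hred.1] at hc
      exact absurd hc (by simp)
    · exact h
  by_cases hdgn : ∀ n, T n = Hd (n + 1)
  · -- degenerate : reds form a directed cycle
    have hk2' : k0 ≠ 2 := by
      intro hk2e
      have hblue := hW.2.2.2 1
      have hT2 : T (0 + k0) = T 0 := hW.1 0
      rw [hk2e] at hT2
      rw [show (1 : ℕ) + 1 = 0 + 2 by rfl, hT2, ← hdgn 0] at hblue
      have := hblue.1
      rw [H.irrefl (T 0)] at this
      exact absurd this (by simp)
    rcases Nat.lt_or_ge k0 4 with hk3 | hk4
    · -- k0 = 3 : the flip case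
      have hk3e : k0 = 3 := by omega
      have hHd0 : Hd 0 = T 2 := by
        have h1 : Hd (0 + k0) = Hd 0 := hW.2.1 0
        rw [hk3e] at h1
        rw [← h1, show (0 : ℕ) + 3 = 2 + 1 by rfl, ← hdgn 2]
      have hHd1 : Hd 1 = T 0 := (hdgn 0).symm
      have hHd2 : Hd 2 = T 1 := (hdgn 1).symm
      have r0 := hW.2.2.1 0
      have r1 := hW.2.2.1 1
      have r2 := hW.2.2.1 2
      rw [hHd0] at r0; rw [hHd1] at r1; rw [hHd2] at r2
      have b0 := hW.2.2.2 0
      have b1 := hW.2.2.2 1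
      have b2 := hW.2.2.2 2
      rw [hHd0] at b0; rw [hHd1] at b1; rw [hHd2] at b2
      have hT3 : T (2 + 1) = T 0 := by
        have h1 : T (0 + k0) = T 0 := hW.1 0
        rw [hk3e] at h1
        rw [show (2 : ℕ) + 1 = 0 + 3 by rfl]
        exact h1
      rw [hT3] at b2
      have h01 : T 0 ≠ T 1 := tne T Hd hW 0 1 (by omega) (by omega)
      have h02 : T 0 ≠ T 2 := tne T Hd hW 0 2 (by omega) (by omega)
      have h12 : T 1 ≠ T 2 := tne T Hd hW 1 2 (by omega) (by omega)
      refine Or.inr (Or.inr ⟨T 0, T 2, T 1, h02, fun h => h12 h.symm, h01, ?_⟩)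
      refine ⟨r0.1, r2.1, r1.1, b1.2, b0.2, b2.2, ?_⟩
      exact dist_flip3_lt G H (T 0) (T 2) (T 1) h02 (fun h => h12 h.symm) h01
        r0.1 r2.1 r1.1 b1.2 b0.2 b2.2 r0.2 r2.2 r1.2 b1.1 b0.1 b2.1
    · -- k0 ≥ 4
      have hHd1 : Hd 1 = T 0 := (hdgn 0).symm
      have hHd2 : Hd 2 = T 1 := (hdgn 1).symm
      have r2 := hW.2.2.1 2
      rw [hHd2] at r2
      have b1 := hW.2.2.2 1
      rw [show (1 : ℕ) + 1 = 2 by rfl, hHd1] at b1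
      have b2 := hW.2.2.2 2
      rw [show (2 : ℕ) + 1 = 3 by rfl, hHd2] at b2
      have h01 : T 0 ≠ T 1 := tne T Hd hW 0 1 (by omega) (by omega)
      have h02 : T 0 ≠ T 2 := tne T Hd hW 0 2 (by omega) (by omega)
      have h03 : T 0 ≠ T 3 := tne T Hd hW 0 3 (by omega) (by omega)
      have h12 : T 1 ≠ T 2 := tne T Hd hW 1 2 (by omega) (by omega)
      have h13 : T 1 ≠ T 3 := tne T Hd hW 1 3 (by omega) (by omega)
      have h23 : T 2 ≠ T 3 := tne T Hd hW 2 3 (by omega) (by omega)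
      cases hH34 : H.Adj (T 3) (T 0)
      · -- swap on H : (T2,T0),(T3,T1) → (T2,T1),(T3,T0)
        refine Or.inr (Or.inl ⟨swapD H (T 2) (T 0) (T 3) (T 1)
          (Ne.symm h02) (Ne.symm h12) (Ne.symm h03) (Ne.symm h13), ?_, ?_⟩)
        · exact twoSwitch_swapD H (T 2) (T 0) (T 3) (T 1)
            (Ne.symm h02) h23 (Ne.symm h12) h03 h01 (Ne.symm h13) b1.1 b2.1 r2.2 hH34
        · rw [dist_comm G _, dist_comm G H]
          apply dist_swapD_lt H G (T 2) (T 0) (T 3) (T 1)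
            (Ne.symm h02) h23 (Ne.symm h12) h03 h01 (Ne.symm h13)
            ?_ b1.1 b2.1 r2.2 hH34 (Ne.symm h03) (Ne.symm h13)
          cases hG34 : G.Adj (T 3) (T 0) <;>
            simp [ms, b1.2, b2.2, r2.1, hG34]
      · cases hG34 : G.Adj (T 3) (T 0)
        · -- blue chord : shorter walk, contradiction
          exfalso
          obtain ⟨T', Hd', hW'⟩ := walk_shorten_deg hW hk4 hdgn ⟨hH34, hG34⟩
          exact hmin (k0 - 1) (by omega) ⟨by omega, T', Hd', hW'⟩
        · -- swap on G : (T2,T1),(T3,T0) → (T2,T0),(T3,T1)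
          refine Or.inl ⟨swapD G (T 2) (T 1) (T 3) (T 0)
            (Ne.symm h12) (Ne.symm h02) (Ne.symm h13) (Ne.symm h03), ?_, ?_⟩
          · exact twoSwitch_swapD G (T 2) (T 1) (T 3) (T 0)
              (Ne.symm h12) h23 (Ne.symm h02) h13 (Ne.symm h01) (Ne.symm h03)
              r2.1 hG34 b1.2 b2.2
          · apply dist_swapD_lt G H (T 2) (T 1) (T 3) (T 0)
              (Ne.symm h12) h23 (Ne.symm h02) h13 (Ne.symm h01) (Ne.symm h03)
              ?_ r2.1 hG34 b1.2 b2.2 (Ne.symm h13) (Ne.symm h03)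
            simp [ms, r2.2, hH34, b1.1, b2.1]
  · -- non-degenerate
    push_neg at hdgn
    obtain ⟨n0, hn0⟩ := hdgn
    obtain ⟨hTp, hHp, hredp, hbluep⟩ := hW
    set S : ℕ → V := fun n => T (n0 + n % k0) with hS
    set E : ℕ → V := fun n => Hd (n0 + n % k0) with hE
    have hW' : IsWalk G H k0 S E := shift_walk hk0pos ⟨hTp, hHp, hredp, hbluep⟩ n0
    have hS0 : S 0 = T n0 := by rw [hS]; simp
    have hE1 : E 1 = Hd (n0 + 1) := by
      rw [hE]
      simp only []
      rw [Nat.mod_eq_of_lt (by omega)]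
    have hnd : S 0 ≠ E 1 := by rw [hS0, hE1]; exact hn0
    have red0 := hW'.2.2.1 0
    have red1 := hW'.2.2.1 1
    have blue0 := hW'.2.2.2 0
    rw [show (0 : ℕ) + 1 = 1 by rfl] at blue0
    have hS01 : S 0 ≠ S 1 := tne S E hW' 0 1 (by omega) (by omega)
    have hE01 : E 0 ≠ E 1 := hhne S E hW' 0 1 (by omega) (by omega)
    have hS0E0 : S 0 ≠ E 0 := by
      intro h
      have := red0.1
      rw [← h, G.irrefl] at this
      exact absurd this (by simp)
    have hS1E1 : S 1 ≠ E 1 := by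
      intro h
      have := red1.1
      rw [← h, G.irrefl] at this
      exact absurd this (by simp)
    have hS1E0 : S 1 ≠ E 0 := by
      intro h
      have := blue0.1
      rw [← h, H.irrefl] at this
      exact absurd this (by simp)
    cases hGc : G.Adj (S 0) (E 1)
    · -- swap on G : (S0,E0),(S1,E1) → (S0,E1),(S1,E0)
      refine Or.inl ⟨swapD G (S 0) (E 0) (S 1) (E 1) hS0E0 hnd hS1E0 hS1E1, ?_, ?_⟩
      · exact twoSwitch_swapD G (S 0) (E 0) (S 1) (E 1)
          hS0E0 hS01 hnd (Ne.symm hS1E0) hE01 hS1E1 red0.1 red1.1 hGc blue0.2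
      · apply dist_swapD_lt G H (S 0) (E 0) (S 1) (E 1)
          hS0E0 hS01 hnd (Ne.symm hS1E0) hE01 hS1E1 ?_ red0.1 red1.1 hGc blue0.2
        cases hb : H.Adj (S 0) (E 1) <;>
          simp [ms, red0.2, red1.2, blue0.1, hb]
    · cases hHc : H.Adj (S 0) (E 1)
      · -- G-only chord : shorter walk, contradiction
        exfalso
        rcases Nat.lt_or_ge k0 3 with hlt3 | hge3
        · -- k0 = 2 : direct contradiction
          have hk2e : k0 = 2 := by omega
          have blue1 := hW'.2.2.2 1
          have hS2 : S (1 + 1) = S 0 := by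
            have h1 : S (0 + k0) = S 0 := hW'.1 0
            rw [hk2e] at h1
            exact h1
          rw [hS2] at blue1
          rw [blue1.1] at hHc
          exact absurd hHc (by simp)
        · obtain ⟨T', Hd', hW''⟩ := walk_shorten_chord hW' hge3 ⟨hGc, hHc⟩
          exact hmin (k0 - 1) (by omega) ⟨by omega, T', Hd', hW''⟩
      · -- swap on H : (S1,E0),(S0,E1) → (S1,E1),(S0,E0)
        refine Or.inr (Or.inl ⟨swapD H (S 1) (E 0) (S 0) (E 1)
          hS1E0 hS1E1 hS0E0 hnd, ?_, ?_⟩)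
        · exact twoSwitch_swapD H (S 1) (E 0) (S 0) (E 1)
            hS1E0 (Ne.symm hS01) hS1E1 (Ne.symm hS0E0) hE01 hnd
            blue0.1 hHc red1.2 red0.2
        · rw [dist_comm G _, dist_comm G H]
          apply dist_swapD_lt H G (S 1) (E 0) (S 0) (E 1)
            hS1E0 (Ne.symm hS01) hS1E1 (Ne.symm hS0E0) hE01 hnd
            ?_ blue0.1 hHc red1.2 red0.2
          simp [ms, blue0.2, hGc, red1.1, red0.1]

end S4P
namespace S4P
variable {V : Type} [Fintype V] [DecidableEq V]
set_option linter.unusedSectionVars false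
set_option linter.unusedVariables false

lemma connected (d : V → ℕ × ℕ)
    (hflip : ∀ (K : SDigraph V) (u v w : V), Realizes K d → u ≠ v → v ≠ w → u ≠ w →
      K.Adj u v = true → K.Adj v w = true → K.Adj w u = true →
      K.Adj v u = false → K.Adj w v = false → K.Adj u w = false →
      Reach2 K (flip3 K u v w)) :
    ∀ n (G H : SDigraph V), dist G H ≤ n → Realizes G d → Realizes H d → Reach2 G H := by
  intro n
  induction n with
  | zero =>
    intro G H h hG hH
    rw [Nat.le_zero] at h
    rw [eq_of_dist_eq_zero h]
    exact Relation.ReflTransGen.refl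
  | succ n ih =>
    intro G H h hG hH
    by_cases hGH : G = H
    · rw [hGH]
      exact Relation.ReflTransGen.refl
    · have hout : ∀ x, G.outDeg x = H.outDeg x := fun x => by rw [(hG x).1, (hH x).1]
      have hin : ∀ x, G.inDeg x = H.inDeg x := fun x => by rw [(hG x).2, (hH x).2]
      rcases exists_reduction G H hout hin hGH with
        ⟨G', hsw, hlt⟩ | ⟨H', hsw, hlt⟩ |
        ⟨u, v, w, h1, h2, h3, a1, a2, a3, a4, a5, a6, hlt⟩
      · have hG' : Realizes G' d := twoSwitch_realizes hsw hG
        exact Relation.ReflTransGen.head (Or.inl hsw) (ih G' H (by omega) hG' hH)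
      · have hH' : Realizes H' d := twoSwitch_realizes hsw hH
        exact (ih G H' (by omega) hG hH').tail (Or.inr hsw)
      · have hre := hflip G u v w hG h1 h2 h3 a1 a2 a3 a4 a5 a6
        have hfl : Realizes (flip3 G u v w) d :=
          flip3_realizes h1 h2 h3 a1 a2 a3 a4 a5 a6 hG
        exact hre.trans (ih (flip3 G u v w) H (by omega) hfl hH)

end S4P

theorem statement4' {N : ℕ} (d : Fin N → ℕ × ℕ)
    (hd : ∃ G : SDigraph (Fin N), Realizes G d)
    (hdisc : ∃ G H : SDigraph (Fin N),
      Realizes G d ∧ Realizes H d ∧ ¬ Reach2 G H) :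
    ∃ (G : SDigraph (Fin N)) (u v w : Fin N),
      Realizes G d ∧ u ≠ v ∧ v ≠ w ∧ u ≠ w ∧
      G.Adj u v = true ∧ G.Adj v w = true ∧ G.Adj w u = true ∧
      G.Adj v u = false ∧ G.Adj w v = false ∧ G.Adj u w = false ∧
      ¬ Reach2 G (flip3 G u v w) := by
  classical
  obtain ⟨G0, H0, hG0, hH0, hnR⟩ := hdisc
  by_contra hcon
  apply hnR
  refine S4P.connected d ?_ (S4P.dist G0 H0) G0 H0 le_rfl hG0 hH0
  intro K u v w hK h1 h2 h3 a1 a2 a3 a4 a5 a6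
  by_contra hnr
  exact hcon ⟨K, u, v, w, hK, h1, h2, h3, a1, a2, a3, a4, a5, a6, hnr⟩

/-- if the 2-switch meta-graph `Ω'_d` is disconnected, then
there is a realization `G` of `d` and a directed 3-cycle `(u,v),(v,w),(w,u)`
in `G` (with no reverse arcs) such that the realization obtained by
reorienting this 3-cycle is not reachable from `G` by 2-switches. -/
theorem statement4 {N : ℕ} (d : Fin N → ℕ × ℕ)
    (hd : ∃ G : SDigraph (Fin N), Realizes G d)
    (hdisc : ∃ G H : SDigraph (Fin N),
      Realizes G d ∧ Realizes H d ∧ ¬ Reach2 G H) :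
    ∃ (G : SDigraph (Fin N)) (u v w : Fin N),
      Realizes G d ∧ u ≠ v ∧ v ≠ w ∧ u ≠ w ∧
      G.Adj u v = true ∧ G.Adj v w = true ∧ G.Adj w u = true ∧
      G.Adj v u = false ∧ G.Adj w v = false ∧ G.Adj u w = false ∧
      ¬ Reach2 G (flip3 G u v w) := statement4' d hd hdisc
end

section
/- Let G be a simple digraph containing three distinct vertices u, v, w with arcs (u,v),(v,w),(w,u) and no arcs (v,u),(w,v),(u,w), and suppose there is a vertex x ∉ {u,v,w} such that (v,x) is an arc of G while (u,x) and (w,x) are not arcs of G. Then G can be transformed by a finite sequence of 2-switches into the digraph G' obtained from G by reorienting the directed 3-cycle on {u,v,w} (replacing arcs (u,v),(v,w),(w,u) with (v,u),(w,v),(u,w) and leaving all other arcs unchanged). -/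
/-- Apply a 2-switch replacing arcs `(a,b),(c,d)` by `(a,d),(c,b)`. -/
def swG {V : Type} [DecidableEq V] (G : SDigraph V) (a b c d : V)
    (hab : a ≠ b) (had : a ≠ d) (hcb : c ≠ b) (hcd : c ≠ d) : SDigraph V where
  Adj x y :=
    if (x = a ∧ y = b) ∨ (x = c ∧ y = d) then false
    else if (x = a ∧ y = d) ∨ (x = c ∧ y = b) then true
    else G.Adj x y
  irrefl := by
    intro z
    try simp only []
    split_ifs with h1 h2
    · rfl
    · rcases h2 with ⟨rfl, rfl⟩ | ⟨rfl, rfl⟩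
      · exact absurd rfl had
      · exact absurd rfl hcb
    · exact G.irrefl z

theorem swG_twoSwitch {V : Type} [DecidableEq V] (G : SDigraph V) (a b c d : V)
    (hab : a ≠ b) (hac : a ≠ c) (had : a ≠ d) (hbc : b ≠ c) (hbd : b ≠ d)
    (hcd : c ≠ d) (h1 : G.Adj a b = true) (h2 : G.Adj c d = true)
    (h3 : G.Adj a d = false) (h4 : G.Adj c b = false) :
    TwoSwitch G (swG G a b c d hab had hbc.symm hcd) :=
  ⟨a, b, c, d, hab, hac, had, hbc, hbd, hcd, h1, h2, h3, h4, fun _ _ => rfl⟩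

theorem SDigraph.ext' {V : Type} {G H : SDigraph V} (h : G.Adj = H.Adj) : G = H := by
  cases G; cases H; simp_all

/-- if `G` has a directed 3-cycle `(u,v),(v,w),(w,u)` (with no
reverse arcs) and a vertex `x ∉ {u,v,w}` with `(v,x)` an arc but `(u,x)` and
`(w,x)` not arcs, then `G` can be transformed by a finite sequence of
2-switches into the digraph obtained by reorienting the 3-cycle on `{u,v,w}`. -/
theorem statement5 {V : Type} [Fintype V] [DecidableEq V] (G : SDigraph V)
    (u v w : V) (huv : u ≠ v) (hvw : v ≠ w) (huw : u ≠ w)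
    (hc : G.Adj u v = true ∧ G.Adj v w = true ∧ G.Adj w u = true ∧
      G.Adj v u = false ∧ G.Adj w v = false ∧ G.Adj u w = false)
    (x : V) (hxu : x ≠ u) (hxv : x ≠ v) (hxw : x ≠ w)
    (hvx : G.Adj v x = true) (hux : G.Adj u x = false) (hwx : G.Adj w x = false) :
    Reach2 G (flip3 G u v w) := by
  obtain ⟨h1, h2, h3, h4, h5, h6⟩ := hc
  have hvu : v ≠ u := huv.symm
  have hwv : w ≠ v := hvw.symm
  have hwu : w ≠ u := huw.symm
  have hux' : u ≠ x := hxu.symm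
  have hvx' : v ≠ x := hxv.symm
  have hwx' : w ≠ x := hxw.symm
  -- switch 1 : remove (v,x),(w,u), add (v,u),(w,x)
  set G1 := swG G v x w u hvx' hvu hwx' hwu with hG1
  -- adjacency facts in G1
  have a1 : G1.Adj u v = true := by
    simp [hG1, swG, huv, hvw, huw, hvu, hwv, hwu, hxu, hxv, hxw, hux', hvx', hwx', h1, h2, h3, h4, h5, h6, hvx, hux, hwx]
  have a2 : G1.Adj w x = true := by
    simp [hG1, swG, huv, hvw, huw, hvu, hwv, hwu, hxu, hxv, hxw, hux', hvx', hwx', h1, h2, h3, h4, h5, h6, hvx, hux, hwx]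
  have a3 : G1.Adj u x = false := by
    simp [hG1, swG, huv, hvw, huw, hvu, hwv, hwu, hxu, hxv, hxw, hux', hvx', hwx', h1, h2, h3, h4, h5, h6, hvx, hux, hwx]
  have a4 : G1.Adj w v = false := by
    simp [hG1, swG, huv, hvw, huw, hvu, hwv, hwu, hxu, hxv, hxw, hux', hvx', hwx', h1, h2, h3, h4, h5, h6, hvx, hux, hwx]
  -- switch 2 : remove (u,v),(w,x), add (u,x),(w,v)
  set G2 := swG G1 u v w x huv hux' hwv hwx' with hG2
  have b1 : G2.Adj v w = true := by
    simp [hG1, hG2, swG, huv, hvw, huw, hvu, hwv, hwu, hxu, hxv, hxw, hux', hvx', hwx', h1, h2, h3, h4, h5, h6, hvx, hux, hwx]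
  have b2 : G2.Adj u x = true := by
    simp [hG1, hG2, swG, huv, hvw, huw, hvu, hwv, hwu, hxu, hxv, hxw, hux', hvx', hwx', h1, h2, h3, h4, h5, h6, hvx, hux, hwx]
  have b3 : G2.Adj v x = false := by
    simp [hG1, hG2, swG, huv, hvw, huw, hvu, hwv, hwu, hxu, hxv, hxw, hux', hvx', hwx', h1, h2, h3, h4, h5, h6, hvx, hux, hwx]
  have b4 : G2.Adj u w = false := by
    simp [hG1, hG2, swG, huv, hvw, huw, hvu, hwv, hwu, hxu, hxv, hxw, hux', hvx', hwx', h1, h2, h3, h4, h5, h6, hvx, hux, hwx]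
  -- switch 3 : remove (v,w),(u,x), add (v,x),(u,w)
  set G3 := swG G2 v w u x hvw hvx' huw hux' with hG3
  have key : G3 = flip3 G u v w := by
    apply SDigraph.ext'
    funext p q
    simp only [hG3, hG2, hG1, swG, flip3]
    by_cases hp1 : p = u <;> by_cases hp2 : p = v <;> by_cases hp3 : p = w <;>
      by_cases hq1 : q = u <;> by_cases hq2 : q = v <;> by_cases hq3 : q = w <;>
      by_cases hp4 : p = x <;> by_cases hq4 : q = x <;>
      simp_all [G.irrefl]
  have s1 : TwoSwitchStep G G1 :=
    Or.inl (swG_twoSwitch G v x w u hvx' hvw hvu hxw hxu hwu hvx h3 h4 hwx)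
  have s2 : TwoSwitchStep G1 G2 :=
    Or.inl (swG_twoSwitch G1 u v w x huv huw hux' hvw hvx' hwx' a1 a2 a3 a4)
  have s3 : TwoSwitchStep G2 G3 :=
    Or.inl (swG_twoSwitch G2 v w u x hvw hvu hvx' hwu hwx' hux' b1 b2 b3 b4)
  rw [← key]
  exact Relation.ReflTransGen.head s1 (Relation.ReflTransGen.head s2
    (Relation.ReflTransGen.single s3))
end

section
/- Let G be a simple digraph containing three distinct vertices u, v, w with arcs (u,v),(v,w),(w,u) and no arcs (v,u),(w,v),(u,w). Suppose x and y are distinct vertices outside {u,v,w} such that none of (x,u),(x,v),(x,w) is an arc of G (x sends no arc into the 3-cycle), none of (u,y),(v,y),(w,y) is an arc of G (y receives no arc from the 3-cycle), and (x,y) is an arc of G. Then G can be transformed by a finite sequence of 2-switches into the digraph G' obtained from G by reorienting the directed 3-cycle on {u,v,w}. -/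
section Aux
variable {V : Type} [DecidableEq V]

/-- The result of performing a 2-switch replacing `(a,b),(c,d)` by `(a,d),(c,b)`. -/
def sw (G : SDigraph V) (a b c d : V) : SDigraph V where
  Adj p q :=
    if (p = a ∧ q = b) ∨ (p = c ∧ q = d) then false
    else if p ≠ q ∧ ((p = a ∧ q = d) ∨ (p = c ∧ q = b)) then true
    else G.Adj p q
  irrefl p := by
    by_cases h : (p = a ∧ p = b) ∨ (p = c ∧ p = d)
    · simp [h]
    · simp [h, G.irrefl p]

lemma sw_adj_ad (G : SDigraph V) (a b c d : V)
    (h13 : a ≠ c) (h14 : a ≠ d) (h24 : b ≠ d) :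
    (sw G a b c d).Adj a d = true := by
  simp [sw, h13, h14, h24.symm]

lemma sw_adj_cb (G : SDigraph V) (a b c d : V)
    (h13 : a ≠ c) (h23 : b ≠ c) (h24 : b ≠ d) :
    (sw G a b c d).Adj c b = true := by
  simp [sw, h13.symm, h23.symm, h24]

lemma sw_adj_ab (G : SDigraph V) (a b c d : V) :
    (sw G a b c d).Adj a b = false := by
  simp [sw]

lemma sw_adj_cd (G : SDigraph V) (a b c d : V) :
    (sw G a b c d).Adj c d = false := by
  simp [sw]

lemma sw_adj_other (G : SDigraph V) (a b c d p q : V)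
    (h1 : ¬(p = a ∧ q = b)) (h2 : ¬(p = c ∧ q = d))
    (h3 : ¬(p = a ∧ q = d)) (h4 : ¬(p = c ∧ q = b)) :
    (sw G a b c d).Adj p q = G.Adj p q := by
  have : ¬((p = a ∧ q = b) ∨ (p = c ∧ q = d)) := by tauto
  have h' : ¬(p ≠ q ∧ ((p = a ∧ q = d) ∨ (p = c ∧ q = b))) := by tauto
  simp only [sw, this, h', if_false]

lemma sw_step (G : SDigraph V) (a b c d : V)
    (h12 : a ≠ b) (h13 : a ≠ c) (h14 : a ≠ d) (h23 : b ≠ c) (h24 : b ≠ d) (h34 : c ≠ d)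
    (hab : G.Adj a b = true) (hcd : G.Adj c d = true)
    (had : G.Adj a d = false) (hcb : G.Adj c b = false) :
    TwoSwitch G (sw G a b c d) := by
  refine ⟨a, b, c, d, h12, h13, h14, h23, h24, h34, hab, hcd, had, hcb, ?_⟩
  intro p q
  show (if (p = a ∧ q = b) ∨ (p = c ∧ q = d) then false
    else if p ≠ q ∧ ((p = a ∧ q = d) ∨ (p = c ∧ q = b)) then true
    else G.Adj p q) = _
  by_cases h1 : (p = a ∧ q = b) ∨ (p = c ∧ q = d)
  · simp [h1]
  · by_cases h2 : (p = a ∧ q = d) ∨ (p = c ∧ q = b)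
    · have hpq : p ≠ q := by
        rcases h2 with ⟨rfl, rfl⟩ | ⟨rfl, rfl⟩
        · exact h14
        · exact h23.symm
      simp [h1, h2, hpq]
    · simp [h1, h2]

end Aux

set_option maxHeartbeats 1000000 in
/-- if `G` has a directed 3-cycle `(u,v),(v,w),(w,u)` (with no
reverse arcs), and `x, y` are distinct vertices outside `{u,v,w}` such that `x`
sends no arc into the 3-cycle, `y` receives no arc from the 3-cycle, and
`(x,y)` is an arc, then `G` can be transformed by a finite sequence of
2-switches into the digraph obtained by reorienting the 3-cycle. -/
theorem statement7 {V : Type} [Fintype V] [DecidableEq V] (G : SDigraph V)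
    (u v w : V) (huv : u ≠ v) (hvw : v ≠ w) (huw : u ≠ w)
    (hc : G.Adj u v = true ∧ G.Adj v w = true ∧ G.Adj w u = true ∧
      G.Adj v u = false ∧ G.Adj w v = false ∧ G.Adj u w = false)
    (x y : V) (hxy : x ≠ y)
    (hxu : x ≠ u) (hxv : x ≠ v) (hxw : x ≠ w)
    (hyu : y ≠ u) (hyv : y ≠ v) (hyw : y ≠ w)
    (hxin : G.Adj x u = false ∧ G.Adj x v = false ∧ G.Adj x w = false)
    (hyout : G.Adj u y = false ∧ G.Adj v y = false ∧ G.Adj w y = false)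
    (harc : G.Adj x y = true) :
    Reach2 G (flip3 G u v w) := by
  obtain ⟨huv1, hvw1, hwu1, hvu0, hwv0, huw0⟩ := hc
  obtain ⟨hxu0, hxv0, hxw0⟩ := hxin
  obtain ⟨huy0, hvy0, hwy0⟩ := hyout
  set G1 := sw G x y u v with hG1
  set G2 := sw G1 u y v w with hG2
  set G3 := sw G2 w u x v with hG3
  have s1 : TwoSwitch G G1 :=
    sw_step G x y u v hxy hxu hxv hyu hyv huv harc huv1 hxv0 huy0
  -- facts about G1
  have e1uy : G1.Adj u y = true := sw_adj_cb G x y u v hxu hyu hyv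
  have e1xv : G1.Adj x v = true := sw_adj_ad G x y u v hxu hxv hyv
  have e1xy : G1.Adj x y = false := sw_adj_ab G x y u v
  have e1 : ∀ p q : V, ¬(p = x ∧ q = y) → ¬(p = u ∧ q = v) → ¬(p = x ∧ q = v) →
      ¬(p = u ∧ q = y) → G1.Adj p q = G.Adj p q := fun p q h1 h2 h3 h4 =>
    sw_adj_other G x y u v p q h1 h2 h3 h4
  have e1vw : G1.Adj v w = true := by rw [e1] <;> simp [harc, huv1, hvw1, hwu1, hvu0, hwv0, huw0, hxu0, hxv0, hxw0, huy0, hvy0, hwy0, Ne.symm huv, Ne.symm hvw, Ne.symm huw, Ne.symm hxy, Ne.symm hxu, Ne.symm hxv, Ne.symm hxw, Ne.symm hyu, Ne.symm hyv, Ne.symm hyw, huv, hvw, huw, hxy, hxu, hxv, hxw, hyu, hyv, hyw]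
  have e1uw : G1.Adj u w = false := by rw [e1] <;> simp [harc, huv1, hvw1, hwu1, hvu0, hwv0, huw0, hxu0, hxv0, hxw0, huy0, hvy0, hwy0, Ne.symm huv, Ne.symm hvw, Ne.symm huw, Ne.symm hxy, Ne.symm hxu, Ne.symm hxv, Ne.symm hxw, Ne.symm hyu, Ne.symm hyv, Ne.symm hyw, huv, hvw, huw, hxy, hxu, hxv, hxw, hyu, hyv, hyw]
  have e1vy : G1.Adj v y = false := by rw [e1] <;> simp [harc, huv1, hvw1, hwu1, hvu0, hwv0, huw0, hxu0, hxv0, hxw0, huy0, hvy0, hwy0, Ne.symm huv, Ne.symm hvw, Ne.symm huw, Ne.symm hxy, Ne.symm hxu, Ne.symm hxv, Ne.symm hxw, Ne.symm hyu, Ne.symm hyv, Ne.symm hyw, huv, hvw, huw, hxy, hxu, hxv, hxw, hyu, hyv, hyw]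
  have e1wu : G1.Adj w u = true := by rw [e1] <;> simp [harc, huv1, hvw1, hwu1, hvu0, hwv0, huw0, hxu0, hxv0, hxw0, huy0, hvy0, hwy0, Ne.symm huv, Ne.symm hvw, Ne.symm huw, Ne.symm hxy, Ne.symm hxu, Ne.symm hxv, Ne.symm hxw, Ne.symm hyu, Ne.symm hyv, Ne.symm hyw, huv, hvw, huw, hxy, hxu, hxv, hxw, hyu, hyv, hyw]
  have e1wv : G1.Adj w v = false := by rw [e1] <;> simp [harc, huv1, hvw1, hwu1, hvu0, hwv0, huw0, hxu0, hxv0, hxw0, huy0, hvy0, hwy0, Ne.symm huv, Ne.symm hvw, Ne.symm huw, Ne.symm hxy, Ne.symm hxu, Ne.symm hxv, Ne.symm hxw, Ne.symm hyu, Ne.symm hyv, Ne.symm hyw, huv, hvw, huw, hxy, hxu, hxv, hxw, hyu, hyv, hyw]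
  have e1xu : G1.Adj x u = false := by rw [e1] <;> simp [harc, huv1, hvw1, hwu1, hvu0, hwv0, huw0, hxu0, hxv0, hxw0, huy0, hvy0, hwy0, Ne.symm huv, Ne.symm hvw, Ne.symm huw, Ne.symm hxy, Ne.symm hxu, Ne.symm hxv, Ne.symm hxw, Ne.symm hyu, Ne.symm hyv, Ne.symm hyw, huv, hvw, huw, hxy, hxu, hxv, hxw, hyu, hyv, hyw]
  have e1vu : G1.Adj v u = false := by rw [e1] <;> simp [harc, huv1, hvw1, hwu1, hvu0, hwv0, huw0, hxu0, hxv0, hxw0, huy0, hvy0, hwy0, Ne.symm huv, Ne.symm hvw, Ne.symm huw, Ne.symm hxy, Ne.symm hxu, Ne.symm hxv, Ne.symm hxw, Ne.symm hyu, Ne.symm hyv, Ne.symm hyw, huv, hvw, huw, hxy, hxu, hxv, hxw, hyu, hyv, hyw]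
  have s2 : TwoSwitch G1 G2 :=
    sw_step G1 u y v w hyu.symm huv huw hyv hyw hvw e1uy e1vw e1uw e1vy
  -- facts about G2
  have e2vy : G2.Adj v y = true := sw_adj_cb G1 u y v w huv hyv hyw
  have e2 : ∀ p q : V, ¬(p = u ∧ q = y) → ¬(p = v ∧ q = w) → ¬(p = u ∧ q = w) →
      ¬(p = v ∧ q = y) → G2.Adj p q = G1.Adj p q := fun p q h1 h2 h3 h4 =>
    sw_adj_other G1 u y v w p q h1 h2 h3 h4
  have e2wu : G2.Adj w u = true := by rw [e2, e1wu] <;> simp [harc, huv1, hvw1, hwu1, hvu0, hwv0, huw0, hxu0, hxv0, hxw0, huy0, hvy0, hwy0, Ne.symm huv, Ne.symm hvw, Ne.symm huw, Ne.symm hxy, Ne.symm hxu, Ne.symm hxv, Ne.symm hxw, Ne.symm hyu, Ne.symm hyv, Ne.symm hyw, huv, hvw, huw, hxy, hxu, hxv, hxw, hyu, hyv, hyw]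
  have e2xv : G2.Adj x v = true := by rw [e2, e1xv] <;> simp [harc, huv1, hvw1, hwu1, hvu0, hwv0, huw0, hxu0, hxv0, hxw0, huy0, hvy0, hwy0, Ne.symm huv, Ne.symm hvw, Ne.symm huw, Ne.symm hxy, Ne.symm hxu, Ne.symm hxv, Ne.symm hxw, Ne.symm hyu, Ne.symm hyv, Ne.symm hyw, huv, hvw, huw, hxy, hxu, hxv, hxw, hyu, hyv, hyw]
  have e2wv : G2.Adj w v = false := by rw [e2, e1wv] <;> simp [harc, huv1, hvw1, hwu1, hvu0, hwv0, huw0, hxu0, hxv0, hxw0, huy0, hvy0, hwy0, Ne.symm huv, Ne.symm hvw, Ne.symm huw, Ne.symm hxy, Ne.symm hxu, Ne.symm hxv, Ne.symm hxw, Ne.symm hyu, Ne.symm hyv, Ne.symm hyw, huv, hvw, huw, hxy, hxu, hxv, hxw, hyu, hyv, hyw]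
  have e2xu : G2.Adj x u = false := by rw [e2, e1xu] <;> simp [harc, huv1, hvw1, hwu1, hvu0, hwv0, huw0, hxu0, hxv0, hxw0, huy0, hvy0, hwy0, Ne.symm huv, Ne.symm hvw, Ne.symm huw, Ne.symm hxy, Ne.symm hxu, Ne.symm hxv, Ne.symm hxw, Ne.symm hyu, Ne.symm hyv, Ne.symm hyw, huv, hvw, huw, hxy, hxu, hxv, hxw, hyu, hyv, hyw]
  have e2xy : G2.Adj x y = false := by rw [e2, e1xy] <;> simp [harc, huv1, hvw1, hwu1, hvu0, hwv0, huw0, hxu0, hxv0, hxw0, huy0, hvy0, hwy0, Ne.symm huv, Ne.symm hvw, Ne.symm huw, Ne.symm hxy, Ne.symm hxu, Ne.symm hxv, Ne.symm hxw, Ne.symm hyu, Ne.symm hyv, Ne.symm hyw, huv, hvw, huw, hxy, hxu, hxv, hxw, hyu, hyv, hyw]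
  have e2vu : G2.Adj v u = false := by rw [e2, e1vu] <;> simp [harc, huv1, hvw1, hwu1, hvu0, hwv0, huw0, hxu0, hxv0, hxw0, huy0, hvy0, hwy0, Ne.symm huv, Ne.symm hvw, Ne.symm huw, Ne.symm hxy, Ne.symm hxu, Ne.symm hxv, Ne.symm hxw, Ne.symm hyu, Ne.symm hyv, Ne.symm hyw, huv, hvw, huw, hxy, hxu, hxv, hxw, hyu, hyv, hyw]
  have s3 : TwoSwitch G2 G3 :=
    sw_step G2 w u x v huw.symm hxw.symm hvw.symm hxu.symm huv hxv e2wu e2xv e2wv e2xu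
  -- facts about G3
  have e3xu : G3.Adj x u = true := sw_adj_cb G2 w u x v hxw.symm hxu.symm huv
  have e3 : ∀ p q : V, ¬(p = w ∧ q = u) → ¬(p = x ∧ q = v) → ¬(p = w ∧ q = v) →
      ¬(p = x ∧ q = u) → G3.Adj p q = G2.Adj p q := fun p q h1 h2 h3 h4 =>
    sw_adj_other G2 w u x v p q h1 h2 h3 h4
  have e3vy : G3.Adj v y = true := by rw [e3, e2vy] <;> simp [harc, huv1, hvw1, hwu1, hvu0, hwv0, huw0, hxu0, hxv0, hxw0, huy0, hvy0, hwy0, Ne.symm huv, Ne.symm hvw, Ne.symm huw, Ne.symm hxy, Ne.symm hxu, Ne.symm hxv, Ne.symm hxw, Ne.symm hyu, Ne.symm hyv, Ne.symm hyw, huv, hvw, huw, hxy, hxu, hxv, hxw, hyu, hyv, hyw]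
  have e3xy : G3.Adj x y = false := by rw [e3, e2xy] <;> simp [harc, huv1, hvw1, hwu1, hvu0, hwv0, huw0, hxu0, hxv0, hxw0, huy0, hvy0, hwy0, Ne.symm huv, Ne.symm hvw, Ne.symm huw, Ne.symm hxy, Ne.symm hxu, Ne.symm hxv, Ne.symm hxw, Ne.symm hyu, Ne.symm hyv, Ne.symm hyw, huv, hvw, huw, hxy, hxu, hxv, hxw, hyu, hyv, hyw]
  have e3vu : G3.Adj v u = false := by rw [e3, e2vu] <;> simp [harc, huv1, hvw1, hwu1, hvu0, hwv0, huw0, hxu0, hxv0, hxw0, huy0, hvy0, hwy0, Ne.symm huv, Ne.symm hvw, Ne.symm huw, Ne.symm hxy, Ne.symm hxu, Ne.symm hxv, Ne.symm hxw, Ne.symm hyu, Ne.symm hyv, Ne.symm hyw, huv, hvw, huw, hxy, hxu, hxv, hxw, hyu, hyv, hyw]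
  have s4 : TwoSwitch G3 (flip3 G u v w) := by
    refine ⟨x, u, v, y, hxu, hxv, hxy, huv, hyu.symm, hyv.symm, e3xu, e3vy, e3xy, e3vu, ?_⟩
    intro p q
    show (if (p = u ∨ p = v ∨ p = w) ∧ (q = u ∨ q = v ∨ q = w) then G.Adj q p
      else G.Adj p q) = _
    simp only [hG3, hG2, hG1, sw]
    clear s1 s2 s3 e1 e2 e3 e1uy e1xv e1xy e1vw e1uw e1vy e1wu e1wv e1xu e1vu e2vy e2wu e2xv e2wv e2xu e2xy e2vu e3xu e3vy e3xy e3vu hG1 hG2 hG3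
    clear_value G1 G2 G3
    clear G1 G2 G3
    have hp : p = u ∨ p = v ∨ p = w ∨ p = x ∨ p = y ∨
        (p ≠ u ∧ p ≠ v ∧ p ≠ w ∧ p ≠ x ∧ p ≠ y) := by tauto
    have hq : q = u ∨ q = v ∨ q = w ∨ q = x ∨ q = y ∨
        (q ≠ u ∧ q ≠ v ∧ q ≠ w ∧ q ≠ x ∧ q ≠ y) := by tauto
    rcases hp with rfl | rfl | rfl | rfl | rfl | ⟨hp1, hp2, hp3, hp4, hp5⟩ <;>
      rcases hq with rfl | rfl | rfl | rfl | rfl | ⟨hq1, hq2, hq3, hq4, hq5⟩ <;>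
      simp_all [G.irrefl, harc, huv1, hvw1, hwu1, hvu0, hwv0, huw0, hxu0, hxv0, hxw0, huy0, hvy0, hwy0, Ne.symm huv, Ne.symm hvw, Ne.symm huw, Ne.symm hxy, Ne.symm hxu, Ne.symm hxv, Ne.symm hxw, Ne.symm hyu, Ne.symm hyv, Ne.symm hyw, huv, hvw, huw, hxy, hxu, hxv, hxw, hyu, hyv, hyw]
  exact .head (Or.inl s1) (.head (Or.inl s2) (.head (Or.inl s3) (.single (Or.inl s4))))
end

section
/- Let d be a digraphic integer-pair sequence such that in every realization G ∈ R(d) the three distinct vertices of a fixed set C = {u,v,w} induce a directed 3-cycle, and fix a realization G ∈ R(d) in which the arcs are (u,v),(v,w),(w,u). Then every vertex x ∉ C falls into one of the four classes: C^0 (no arcs between x and C in either direction), C^- (all three arcs from x to C present, no arcs from C to x), C^+ (all three arcs from C to x present, no arcs from x to C), or C^± (all six arcs between x and C present). That is, for every x ∉ C, the arcs from C to x are either all present or all absent, and the arcs from x to C are either all present or all absent. -/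
/-- `x` is in class `C⁰` relative to `C = {u,v,w}`: no arcs between `x` and
`C` in either direction. -/
def InC0 {V : Type} (G : SDigraph V) (u v w x : V) : Prop :=
  G.Adj x u = false ∧ G.Adj x v = false ∧ G.Adj x w = false ∧
  G.Adj u x = false ∧ G.Adj v x = false ∧ G.Adj w x = false

/-- `x` is in class `C⁻`: all three arcs from `x` to `C` are present and no
arcs from `C` to `x`. -/
def InCminus {V : Type} (G : SDigraph V) (u v w x : V) : Prop :=
  G.Adj x u = true ∧ G.Adj x v = true ∧ G.Adj x w = true ∧
  G.Adj u x = false ∧ G.Adj v x = false ∧ G.Adj w x = false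

/-- `x` is in class `C⁺`: all three arcs from `C` to `x` are present and no
arcs from `x` to `C`. -/
def InCplus {V : Type} (G : SDigraph V) (u v w x : V) : Prop :=
  G.Adj x u = false ∧ G.Adj x v = false ∧ G.Adj x w = false ∧
  G.Adj u x = true ∧ G.Adj v x = true ∧ G.Adj w x = true

/-- `x` is in class `C^±`: all six arcs between `x` and `C` are present. -/
def InCpm {V : Type} (G : SDigraph V) (u v w x : V) : Prop :=
  G.Adj x u = true ∧ G.Adj x v = true ∧ G.Adj x w = true ∧
  G.Adj u x = true ∧ G.Adj v x = true ∧ G.Adj w x = true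

lemma card_swap {V : Type} [Fintype V] [DecidableEq V] (p q : V → Bool) (a b : V)
    (hab : a ≠ b) (hpa : p a = true) (hpb : p b = false)
    (hqa : q a = false) (hqb : q b = true)
    (h : ∀ y, y ≠ a → y ≠ b → q y = p y) :
    (Finset.univ.filter fun y => q y = true).card
      = (Finset.univ.filter fun y => p y = true).card := by
  have hset : (Finset.univ.filter fun y => q y = true)
      = insert b ((Finset.univ.filter fun y => p y = true).erase a) := by
    ext y
    simp only [Finset.mem_filter, Finset.mem_univ, true_and, Finset.mem_insert,
      Finset.mem_erase]
    constructor
    · intro hy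
      by_cases hya : y = a
      · subst hya; rw [hqa] at hy; cases hy
      by_cases hyb : y = b
      · left; exact hyb
      · right; exact ⟨hya, by rw [← h y hya hyb]; exact hy⟩
    · rintro (rfl | ⟨hya, hy⟩)
      · exact hqb
      · by_cases hyb : y = b
        · subst hyb; rw [hpb] at hy; cases hy
        · rw [h y hya hyb]; exact hy
  have hamem : a ∈ (Finset.univ.filter fun y => p y = true) := by
    simp [hpa]
  have hbnot : b ∉ (Finset.univ.filter fun y => p y = true).erase a := by
    simp [hpb]
  have hpos : 0 < (Finset.univ.filter fun y => p y = true).card :=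
    Finset.card_pos.mpr ⟨a, hamem⟩
  rw [hset, Finset.card_insert_of_notMem hbnot, Finset.card_erase_of_mem hamem]
  omega

lemma twoSwitch_deg {V : Type} [Fintype V] [DecidableEq V] {G H : SDigraph V}
    (h : TwoSwitch G H) :
    ∀ a, H.outDeg a = G.outDeg a ∧ H.inDeg a = G.inDeg a := by
  obtain ⟨v₁, v₂, v₃, v₄, h12, h13, h14, h23, h24, h34, g12, g34, g14, g32, hH⟩ := h
  intro a
  constructor
  · unfold SDigraph.outDeg
    by_cases ha1 : a = v₁
    · subst ha1
      apply card_swap (G.Adj a) (H.Adj a) v₂ v₄ h24 g12 g14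
      · rw [hH]; simp
      · rw [hH]; simp [h13, h24.symm]
      · intro y hy2 hy4; rw [hH]; simp [h13, hy2, hy4]
    · by_cases ha3 : a = v₃
      · subst ha3
        apply card_swap (G.Adj a) (H.Adj a) v₄ v₂ h24.symm g34 g32
        · rw [hH]; simp [Ne.symm h13]
        · rw [hH]; simp [Ne.symm h13, h24]
        · intro y hy4 hy2; rw [hH]; simp [Ne.symm h13, hy2, hy4]
      · have : ∀ y, H.Adj a y = G.Adj a y := by
          intro y; rw [hH]; simp [ha1, ha3]
        simp only [this]
  · unfold SDigraph.inDeg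
    by_cases ha2 : a = v₂
    · subst ha2
      apply card_swap (fun y => G.Adj y a) (fun y => H.Adj y a) v₁ v₃ h13 g12 g32
      · rw [hH]; simp
      · rw [hH]; simp [Ne.symm h13, h24, h34.symm, Ne.symm h23]
      · intro y hy1 hy3; rw [hH]; simp [hy1, hy3]
    · by_cases ha4 : a = v₄
      · subst ha4
        apply card_swap (fun y => G.Adj y a) (fun y => H.Adj y a) v₃ v₁ (Ne.symm h13) g34 g14
        · rw [hH]; simp [h34]
        · rw [hH]; simp [h13, h34, h24.symm]
        · intro y hy3 hy1; rw [hH]; simp [hy1, hy3]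
      · have : ∀ y, H.Adj y a = G.Adj y a := by
          intro y; rw [hH]; simp [ha2, ha4]
        simp only [this]

lemma twoSwitch_realizes {V : Type} [Fintype V] [DecidableEq V] {G H : SDigraph V}
    {d : V → ℕ × ℕ} (h : TwoSwitch G H) (hG : Realizes G d) : Realizes H d := by
  intro a
  obtain ⟨h1, h2⟩ := twoSwitch_deg h a
  rw [h1, h2]
  exact hG a

lemma step_out {V : Type} [Fintype V] [DecidableEq V] (d : V → ℕ × ℕ)
    (a b c x : V) (hab : a ≠ b) (hbc : b ≠ c) (hac : a ≠ c)
    (hxa : x ≠ a) (hxb : x ≠ b) (hxc : x ≠ c)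
    (hanchor : ∀ G : SDigraph V, Realizes G d → InducesC3 G a b c)
    (G : SDigraph V) (hG : Realizes G d)
    (gab : G.Adj a b = true) (gbc : G.Adj b c = true) (gca : G.Adj c a = true)
    (gba : G.Adj b a = false) (gcb : G.Adj c b = false) (gac : G.Adj a c = false)
    (hax : G.Adj a x = true) : G.Adj b x = true := by
  by_contra hbx'
  have hbx : G.Adj b x = false := Bool.eq_false_iff.mpr hbx'
  set H : SDigraph V :=
    ⟨fun p q =>
      if (p = a ∧ q = x) ∨ (p = b ∧ q = c) then false
      else if (p = a ∧ q = c) ∨ (p = b ∧ q = x) then true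
      else G.Adj p q, by
      intro y
      have h1 : ¬((y = a ∧ y = x) ∨ (y = b ∧ y = c)) := by
        rintro (⟨rfl, rfl⟩ | ⟨rfl, rfl⟩)
        · exact hxa rfl
        · exact hbc rfl
      have h2 : ¬((y = a ∧ y = c) ∨ (y = b ∧ y = x)) := by
        rintro (⟨rfl, rfl⟩ | ⟨rfl, rfl⟩)
        · exact hac rfl
        · exact hxb rfl
      simp only [h1, h2, if_false, G.irrefl]⟩ with hHdef
  have tsw : TwoSwitch G H :=
    ⟨a, x, b, c, Ne.symm hxa, hab, hac, hxb, hxc, hbc,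
      hax, gbc, gac, hbx, fun p q => rfl⟩
  have hreal : Realizes H d := twoSwitch_realizes tsw hG
  have hC3 := hanchor H hreal
  have hHbc : H.Adj b c = false := by
    show (if (b = a ∧ c = x) ∨ (b = b ∧ c = c) then false
      else if _ then true else G.Adj b c) = false
    simp
  have hHba : H.Adj b a = false := by
    show (if (b = a ∧ a = x) ∨ (b = b ∧ a = c) then false
      else if (b = a ∧ a = c) ∨ (b = b ∧ a = x) then true else G.Adj b a) = false
    simp [Ne.symm hab, hac, Ne.symm hxa, gba]
  rcases hC3 with ⟨_, h1, _⟩ | ⟨h2, _⟩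
  · rw [hHbc] at h1; cases h1
  · rw [hHba] at h2; cases h2

lemma step_in {V : Type} [Fintype V] [DecidableEq V] (d : V → ℕ × ℕ)
    (a b c x : V) (hab : a ≠ b) (hbc : b ≠ c) (hac : a ≠ c)
    (hxa : x ≠ a) (hxb : x ≠ b) (hxc : x ≠ c)
    (hanchor : ∀ G : SDigraph V, Realizes G d → InducesC3 G a b c)
    (G : SDigraph V) (hG : Realizes G d)
    (gab : G.Adj a b = true) (gbc : G.Adj b c = true) (gca : G.Adj c a = true)
    (gba : G.Adj b a = false) (gcb : G.Adj c b = false) (gac : G.Adj a c = false)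
    (hxb' : G.Adj x b = true) : G.Adj x a = true := by
  by_contra hxa'
  have hxa2 : G.Adj x a = false := Bool.eq_false_iff.mpr hxa'
  set H : SDigraph V :=
    ⟨fun p q =>
      if (p = c ∧ q = a) ∨ (p = x ∧ q = b) then false
      else if (p = c ∧ q = b) ∨ (p = x ∧ q = a) then true
      else G.Adj p q, by
      intro y
      have h1 : ¬((y = c ∧ y = a) ∨ (y = x ∧ y = b)) := by
        rintro (⟨rfl, rfl⟩ | ⟨rfl, rfl⟩)
        · exact hac rfl
        · exact hxb rfl
      have h2 : ¬((y = c ∧ y = b) ∨ (y = x ∧ y = a)) := by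
        rintro (⟨rfl, rfl⟩ | ⟨rfl, rfl⟩)
        · exact hbc rfl
        · exact hxa rfl
      simp only [h1, h2, if_false, G.irrefl]⟩ with hHdef
  have tsw : TwoSwitch G H :=
    ⟨c, a, x, b, Ne.symm hac, Ne.symm hxc, Ne.symm hbc, Ne.symm hxa, hab, hxb,
      gca, hxb', gcb, hxa2, fun p q => rfl⟩
  have hreal : Realizes H d := twoSwitch_realizes tsw hG
  have hC3 := hanchor H hreal
  have hHca : H.Adj c a = false := by
    show (if (c = c ∧ a = a) ∨ (c = x ∧ a = b) then false
      else if _ then true else G.Adj c a) = false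
    simp
  have hHba : H.Adj b a = false := by
    show (if (b = c ∧ a = a) ∨ (b = x ∧ a = b) then false
      else if (b = c ∧ a = b) ∨ (b = x ∧ a = a) then true else G.Adj b a) = false
    simp [hbc, Ne.symm hxb, gba]
  rcases hC3 with ⟨_, _, h1, _⟩ | ⟨h2, _⟩
  · rw [hHca] at h1; cases h1
  · rw [hHba] at h2; cases h2

/-- if every realization of the digraphic sequence `d`
induces a directed 3-cycle on the three distinct vertices `u, v, w`, and `G`
is a realization with arcs `(u,v),(v,w),(w,u)`, then every vertex `x` outside
`C = {u,v,w}` has its arcs from `C` all present or all absent, and its arcs to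
`C` all present or all absent; i.e. `x` lies in one of the classes
`C⁰, C⁻, C⁺, C^±`. -/
theorem statement9 {V : Type} [Fintype V] [DecidableEq V] (d : V → ℕ × ℕ)
    (u v w : V) (huv : u ≠ v) (hvw : v ≠ w) (huw : u ≠ w)
    (hanchor : ∀ G : SDigraph V, Realizes G d → InducesC3 G u v w)
    (G : SDigraph V) (hG : Realizes G d)
    (horient : G.Adj u v = true ∧ G.Adj v w = true ∧ G.Adj w u = true)
    (x : V) (hxu : x ≠ u) (hxv : x ≠ v) (hxw : x ≠ w) :
    ((G.Adj u x = true ∧ G.Adj v x = true ∧ G.Adj w x = true) ∨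
      (G.Adj u x = false ∧ G.Adj v x = false ∧ G.Adj w x = false)) ∧
    ((G.Adj x u = true ∧ G.Adj x v = true ∧ G.Adj x w = true) ∨
      (G.Adj x u = false ∧ G.Adj x v = false ∧ G.Adj x w = false)) := by
  obtain ⟨guv, gvw, gwu⟩ := horient
  have hcyc := hanchor G hG
  have hconf : G.Adj v u = false ∧ G.Adj w v = false ∧ G.Adj u w = false := by
    rcases hcyc with ⟨_, _, _, h1, h2, h3⟩ | ⟨_, _, _, h, _⟩
    · exact ⟨h1, h2, h3⟩
    · rw [guv] at h; cases h
  obtain ⟨gvu, gwv, guw⟩ := hconf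
  have hanchor2 : ∀ G' : SDigraph V, Realizes G' d → InducesC3 G' v w u := by
    intro G' h'
    have := hanchor G' h'
    unfold InducesC3 at *
    tauto
  have hanchor3 : ∀ G' : SDigraph V, Realizes G' d → InducesC3 G' w u v := by
    intro G' h'
    have := hanchor G' h'
    unfold InducesC3 at *
    tauto
  have s1 : G.Adj u x = true → G.Adj v x = true :=
    step_out d u v w x huv hvw huw hxu hxv hxw hanchor G hG
      guv gvw gwu gvu gwv guw
  have s2 : G.Adj v x = true → G.Adj w x = true :=
    step_out d v w u x hvw (Ne.symm huw) (Ne.symm huv) hxv hxw hxu hanchor2 G hG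
      gvw gwu guv gwv guw gvu
  have s3 : G.Adj w x = true → G.Adj u x = true :=
    step_out d w u v x (Ne.symm huw) huv (Ne.symm hvw) hxw hxu hxv hanchor3 G hG
      gwu guv gvw guw gvu gwv
  have t1 : G.Adj x v = true → G.Adj x u = true :=
    step_in d u v w x huv hvw huw hxu hxv hxw hanchor G hG
      guv gvw gwu gvu gwv guw
  have t2 : G.Adj x w = true → G.Adj x v = true :=
    step_in d v w u x hvw (Ne.symm huw) (Ne.symm huv) hxv hxw hxu hanchor2 G hG
      gvw gwu guv gwv guw gvu
  have t3 : G.Adj x u = true → G.Adj x w = true :=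
    step_in d w u v x (Ne.symm huw) huv (Ne.symm hvw) hxw hxu hxv hanchor3 G hG
      gwu guv gvw guw gvu gwv
  constructor
  · by_cases h : G.Adj u x = true
    · exact Or.inl ⟨h, s1 h, s2 (s1 h)⟩
    · refine Or.inr ⟨Bool.eq_false_iff.mpr h, ?_, ?_⟩
      · cases hv : G.Adj v x with
        | false => rfl
        | true => exact absurd (s3 (s2 hv)) h
      · cases hw : G.Adj w x with
        | false => rfl
        | true => exact absurd (s3 hw) h
  · by_cases h : G.Adj x u = true
    · exact Or.inl ⟨h, t2 (t3 h), t3 h⟩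
    · refine Or.inr ⟨Bool.eq_false_iff.mpr h, ?_, ?_⟩
      · cases hv : G.Adj x v with
        | false => rfl
        | true => exact absurd (t1 hv) h
      · cases hw : G.Adj x w with
        | false => rfl
        | true => exact absurd (t1 (t2 hw)) h
end
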